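/- arXiv:1510.07324 — 6 statements merged into one kernel-verified Lean document; each statement's English description precedes it below -/
import Mathlib

section
/- Let (I, d, l, A, (R_ι)) be finite gauged poly-log-homogeneous data over dimension D, with associated ζ-function ζ and critical set I₀. Then there exists ε > 0 such that for every z ∈ ℂ with 0 < |z| < ε one has D + d_ι + z + 1 ≠ 0 for all ι ∈ I, the power series below converges absolutely, and ζ(z) = Σ_{ι∈I₀} Σ_{n=0}^{l_ι} (−1)^{l_ι+1} l_ι! · R_ι^{(n)}(0)/n! · z^{n−l_ι−1} + Σ_{n=0}^{∞} c_n z^n, where c_n = A^{(n)}(0)/n! + Σ_{ι∈I∖I₀} Σ_{j=0}^{n} (−1)^{l_ι+j+1} · ((l_ι+j)!/j!) · (D + d_ι + 1)^{−(l_ι+j+1)} · R_ι^{(n−j)}(0)/(n−j)! + Σ_{ι∈I₀} (−1)^{l_ι+1} l_ι! · R_ι^{(n+l_ι+1)}(0)/(n+l_ι+1)!. -/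
open scoped Classical

/-- The ζ-function associated to finite gauged poly-log-homogeneous data
`(I, d, l, A, (R_ι))` over dimension `D`:
`ζ(z) = A(z) + Σ_ι (−1)^{l_ι+1} l_ι! (D + d_ι + z + 1)^{−(l_ι+1)} R_ι(z)`. -/
noncomputable def zetaFn {I : Type*} [Fintype I] (D : ℕ) (d : I → ℂ) (l : I → ℕ)
    (A : ℂ → ℂ) (R : I → ℂ → ℂ) (z : ℂ) : ℂ :=
  A z + ∑ i, (-1 : ℂ) ^ (l i + 1) * (Nat.factorial (l i) : ℂ) *
    ((D : ℂ) + d i + z + 1) ^ (-(l i + 1 : ℤ)) * R i z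

/-- The critical index set `I₀ = {ι : d_ι = −D−1}`. -/
noncomputable def critSet {I : Type*} [Fintype I] (D : ℕ) (d : I → ℂ) : Finset I :=
  Finset.univ.filter fun i => d i = -(D : ℂ) - 1

/-- The coefficient `c_n` of `z^n` in the regular part of the Laurent expansion of the
ζ-function of finite gauged poly-log-homogeneous data at `z = 0`. -/
noncomputable def laurentCoeff {I : Type*} [Fintype I] (D : ℕ) (d : I → ℂ) (l : I → ℕ)
    (A : ℂ → ℂ) (R : I → ℂ → ℂ) (n : ℕ) : ℂ :=
  iteratedDeriv n A 0 / (Nat.factorial n : ℂ) +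
    (∑ i ∈ Finset.univ \ critSet D d, ∑ j ∈ Finset.range (n + 1),
      (-1 : ℂ) ^ (l i + j + 1) * ((Nat.factorial (l i + j) : ℂ) / (Nat.factorial j : ℂ)) *
        ((D : ℂ) + d i + 1) ^ (-(l i + j + 1 : ℤ)) *
        (iteratedDeriv (n - j) (R i) 0 / (Nat.factorial (n - j) : ℂ))) +
    ∑ i ∈ critSet D d, (-1 : ℂ) ^ (l i + 1) * (Nat.factorial (l i) : ℂ) *
      (iteratedDeriv (n + l i + 1) (R i) 0 / (Nat.factorial (n + l i + 1) : ℂ))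

/-- The principal part `Σ_{ι∈I₀} Σ_{n=0}^{l_ι} (−1)^{l_ι+1} l_ι! R_ι^{(n)}(0)/n! · z^{n−l_ι−1}`
of the Laurent expansion of the ζ-function at `z = 0`. -/
noncomputable def principalPart {I : Type*} [Fintype I] (D : ℕ) (d : I → ℂ) (l : I → ℕ)
    (R : I → ℂ → ℂ) (z : ℂ) : ℂ :=
  ∑ i ∈ critSet D d, ∑ n ∈ Finset.range (l i + 1),
    (-1 : ℂ) ^ (l i + 1) * (Nat.factorial (l i) : ℂ) *
      (iteratedDeriv n (R i) 0 / (Nat.factorial n : ℂ)) * z ^ ((n : ℤ) - l i - 1)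



private lemma taylor_hasSum {f : ℂ → ℂ} {r : ℝ} (hf : DifferentiableOn ℂ f (Metric.ball 0 r))
    {z : ℂ} (hz : ‖z‖ < r) :
    HasSum (fun n : ℕ => iteratedDeriv n f 0 / (Nat.factorial n : ℂ) * z ^ n) (f z) := by
  have h := Complex.hasSum_taylorSeries_on_ball hf
    (show z ∈ Metric.ball (0:ℂ) r by simpa [Metric.mem_ball, dist_zero_right] using hz)
  have e : (fun n : ℕ => iteratedDeriv n f 0 / (Nat.factorial n : ℂ) * z ^ n)
      = fun n : ℕ => (Nat.factorial n : ℂ)⁻¹ • (z - 0) ^ n • iteratedDeriv n f 0 := by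
    funext n
    simp only [smul_eq_mul, sub_zero]
    ring
  rw [e]
  exact h

private lemma exists_ball_diffOn {f : ℂ → ℂ} (hf : AnalyticAt ℂ f 0) :
    ∃ r > 0, DifferentiableOn ℂ f (Metric.ball 0 r) := by
  have := hf.eventually_analyticAt
  rw [Metric.eventually_nhds_iff_ball] at this
  obtain ⟨r, hr, h⟩ := this
  exact ⟨r, hr, fun y hy => ((h y hy).differentiableAt).differentiableWithinAt⟩

private lemma hasSum_inv_shift_pow {w z : ℂ} (hw : w ≠ 0) (hz : ‖z‖ < ‖w‖) (l : ℕ) :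
    HasSum (fun j : ℕ => ((-1:ℂ)^j * ((j + l).choose l : ℂ) * w ^ (-((l:ℤ) + j + 1))) * z ^ j)
      ((w + z) ^ (-((l:ℤ) + 1))) := by
  have hwz : w + z ≠ 0 := by
    intro h
    have : z = -w := by linear_combination h
    rw [this, norm_neg] at hz
    exact lt_irrefl _ hz
  have hx : ‖-(z/w)‖ < 1 := by
    rw [norm_neg, norm_div, div_lt_one (norm_pos_iff.2 hw)]
    exact hz
  have h := (hasSum_choose_mul_geometric_of_norm_lt_one l hx).mul_left (w ^ (-((l:ℤ) + 1)))
  convert h using 1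
  · rfl
  · funext j
    have hwj : (w:ℂ) ^ j ≠ 0 := pow_ne_zero _ hw
    have hwl : (w:ℂ) ^ (l+1) ≠ 0 := pow_ne_zero _ hw
    have e1 : w ^ (-((l:ℤ) + j + 1)) = (w ^ (l+1))⁻¹ * (w ^ j)⁻¹ := by
      rw [show -((l:ℤ) + j + 1) = -((l:ℤ)+1) + -(j:ℤ) by ring, zpow_add₀ hw,
        ← Nat.cast_add_one, zpow_neg, zpow_neg, zpow_natCast, zpow_natCast]
    have e2 : w ^ (-((l:ℤ) + 1)) = (w ^ (l+1))⁻¹ := by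
      rw [← Nat.cast_add_one, zpow_neg, zpow_natCast]
    rw [e1, e2]
    field_simp
    ring_nf
    rw [inv_pow]
    field_simp
  · have e3 : (1 : ℂ) - -(z/w) = (w + z)/w := by field_simp; ring
    have e2 : w ^ (-((l:ℤ) + 1)) = (w ^ (l+1))⁻¹ := by
      rw [← Nat.cast_add_one, zpow_neg, zpow_natCast]
    have e4 : (w + z) ^ (-((l:ℤ) + 1)) = ((w+z) ^ (l+1))⁻¹ := by
      rw [← Nat.cast_add_one, zpow_neg, zpow_natCast]
    rw [e2, e3, e4, div_pow]
    have h1 : ((w+z):ℂ) ^ (l+1) ≠ 0 := pow_ne_zero _ hwz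
    have h2 : (w:ℂ) ^ (l+1) ≠ 0 := pow_ne_zero _ hw
    field_simp

private lemma coeff_match (l j : ℕ) :
    (-1:ℂ)^(l+j+1) * ((Nat.factorial (l+j) : ℂ) / (Nat.factorial j : ℂ)) =
      ((-1:ℂ)^(l+1) * (Nat.factorial l : ℂ)) * ((-1:ℂ)^j * ((j + l).choose l : ℂ)) := by
  have hn : (j + l).choose l * Nat.factorial l * Nat.factorial j = Nat.factorial (l + j) := by
    have := Nat.choose_mul_factorial_mul_factorial (Nat.le_add_left l j)
    simpa [Nat.add_sub_cancel, add_comm] using this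
  have hcast : (Nat.factorial (l+j) : ℂ) =
      ((j + l).choose l : ℂ) * (Nat.factorial l : ℂ) * (Nat.factorial j : ℂ) := by
    exact_mod_cast (congrArg Nat.cast hn).symm
  have hj : (Nat.factorial j : ℂ) ≠ 0 := Nat.cast_ne_zero.2 (Nat.factorial_ne_zero _)
  rw [hcast, pow_add, pow_add]
  field_simp
  ring

private lemma crit_piece {z : ℂ} (hz0 : z ≠ 0) (c : ℂ) (l : ℕ) {g : ℕ → ℂ} {S : ℂ}
    (hg : HasSum (fun n : ℕ => g n * z ^ n) S) :
    HasSum (fun m : ℕ => c * g (m + l + 1) * z ^ m)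
      (c * z ^ (-((l:ℤ) + 1)) * S
        - ∑ n ∈ Finset.range (l + 1), c * g n * z ^ ((n:ℤ) - l - 1)) := by
  have hsum := hg.summable
  have htail : Summable (fun m : ℕ => g (m + (l+1)) * z ^ (m + (l+1))) :=
    ((summable_nat_add_iff (l+1)).2 hsum :)
  have hkey := Summable.sum_add_tsum_nat_add (l+1) hsum
  rw [hg.tsum_eq] at hkey
  have htsum : ∑' m : ℕ, g (m + (l+1)) * z ^ (m + (l+1))
      = S - ∑ n ∈ Finset.range (l+1), g n * z ^ n := by
    linear_combination hkey
  have hts : HasSum (fun m : ℕ => g (m + (l+1)) * z ^ (m + (l+1)))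
      (S - ∑ n ∈ Finset.range (l+1), g n * z ^ n) := htsum ▸ htail.hasSum
  have h := hts.mul_left (c * z ^ (-((l:ℤ) + 1)))
  convert h using 1
  · rfl
  · funext m
    have e : (z : ℂ) ^ (m + (l+1)) * z ^ (-((l:ℤ) + 1)) = z ^ m := by
      rw [← zpow_natCast z (m + (l+1)), ← zpow_add₀ hz0, ← zpow_natCast z m]
      congr 1
      push_cast
      ring
    calc c * g (m + l + 1) * z ^ m
        = c * z ^ (-((l:ℤ)+1)) * (g (m + (l+1)) * z ^ (m + (l+1))) := by
          rw [← e]; ring_nf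
      _ = _ := rfl
  · rw [mul_sub, Finset.mul_sum]
    congr 1
    apply Finset.sum_congr rfl
    intro n _
    have e : (z : ℂ) ^ (-((l:ℤ)+1)) * z ^ n = z ^ ((n:ℤ) - l - 1) := by
      rw [← zpow_natCast z n, ← zpow_add₀ hz0]
      congr 1
      ring
    calc c * g n * z ^ ((n:ℤ) - l - 1)
        = c * g n * (z ^ (-((l:ℤ)+1)) * z ^ n) := by rw [e]
      _ = c * z ^ (-((l:ℤ)+1)) * (g n * z ^ n) := by ring

private lemma nc_piece {w z : ℂ} (hw : w ≠ 0) (hz : ‖z‖ < ‖w‖) (c : ℂ) (l : ℕ)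
    {g : ℕ → ℂ} {S : ℂ} (hg : HasSum (fun n : ℕ => g n * z ^ n) S) :
    HasSum (fun n : ℕ => (∑ j ∈ Finset.range (n + 1),
        (c * ((-1:ℂ)^j * ((j + l).choose l : ℂ) * w ^ (-((l:ℤ) + j + 1)))) * g (n - j)) * z ^ n)
      (c * (w + z) ^ (-((l:ℤ) + 1)) * S) := by
  have hb := hasSum_inv_shift_pow hw hz l
  have hbn : Summable (fun j : ℕ =>
      ‖((-1:ℂ)^j * ((j + l).choose l : ℂ) * w ^ (-((l:ℤ) + j + 1))) * z ^ j‖) :=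
    summable_norm_iff.2 hb.summable
  have hgn : Summable (fun n : ℕ => ‖g n * z ^ n‖) := summable_norm_iff.2 hg.summable
  have h := (hasSum_sum_range_mul_of_summable_norm hbn hgn).mul_left c
  rw [hb.tsum_eq, hg.tsum_eq] at h
  convert h using 1
  · rfl
  · funext n
    rw [Finset.mul_sum, Finset.sum_mul]
    apply Finset.sum_congr rfl
    intro j hj
    have hjn : j ≤ n := Nat.lt_succ_iff.1 (Finset.mem_range.1 hj)
    have e : z ^ j * z ^ (n - j) = z ^ n := by
      rw [← pow_add, Nat.add_sub_cancel' hjn]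
    calc c * ((-1:ℂ)^j * ((j + l).choose l : ℂ) * w ^ (-((l:ℤ) + j + 1))) * g (n - j) * z ^ n
        = c * (((-1:ℂ)^j * ((j + l).choose l : ℂ) * w ^ (-((l:ℤ) + j + 1))) * z ^ j
            * (g (n - j) * z ^ (n - j))) := by rw [← e]; ring
      _ = _ := rfl
  · ring

/-- Laurent expansion of the ζ-function of finite gauged poly-log-homogeneous data at 0. -/
theorem stmt_4 {I : Type*} [Fintype I] (D : ℕ) (d : I → ℂ) (l : I → ℕ)
    (hinj : Function.Injective fun i => (d i, l i))
    (A : ℂ → ℂ) (R : I → ℂ → ℂ)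
    (hA : AnalyticAt ℂ A 0) (hR : ∀ i, AnalyticAt ℂ (R i) 0) :
    ∃ ε > 0, ∀ z : ℂ, 0 < ‖z‖ → ‖z‖ < ε →
      (∀ i, (D : ℂ) + d i + z + 1 ≠ 0) ∧
      Summable (fun n : ℕ => ‖laurentCoeff D d l A R n * z ^ n‖) ∧
      zetaFn D d l A R z =
        principalPart D d l R z + ∑' n : ℕ, laurentCoeff D d l A R n * z ^ n := by
  obtain ⟨rA, hrA, hAd⟩ := exists_ball_diffOn hA
  have hRd' : ∀ i, ∃ r > 0, DifferentiableOn ℂ (R i) (Metric.ball 0 r) :=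
    fun i => exists_ball_diffOn (hR i)
  choose rR hrR hRd using hRd'
  have hw_ne : ∀ i, d i ≠ -(D:ℂ) - 1 → (D:ℂ) + d i + 1 ≠ 0 := by
    intro i hi h
    exact hi (by linear_combination h)
  set e : Option I → ℝ := fun o =>
    o.elim rA (fun i => if d i = -(D:ℂ) - 1 then rR i else min (rR i) ‖(D:ℂ) + d i + 1‖)
    with he_def
  have hepos : ∀ o, 0 < e o := by
    intro o
    match o with
    | none => exact hrA
    | some i =>
      simp only [he_def, Option.elim]
      split_ifs with h
      · exact hrR i
      · exact lt_min (hrR i) (norm_pos_iff.2 (hw_ne i h))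
  refine ⟨Finset.univ.inf' Finset.univ_nonempty e, ?_, ?_⟩
  · exact (Finset.lt_inf'_iff _).2 fun o _ => hepos o
  intro z hz hzε
  have hz0 : z ≠ 0 := norm_pos_iff.1 hz
  have hεle : ∀ o : Option I, Finset.univ.inf' Finset.univ_nonempty e ≤ e o :=
    fun o => Finset.inf'_le e (Finset.mem_univ o)
  have hzA : ‖z‖ < rA := lt_of_lt_of_le hzε (hεle none)
  have hzR : ∀ i, ‖z‖ < rR i := by
    intro i
    refine lt_of_lt_of_le (lt_of_lt_of_le hzε (hεle (some i))) ?_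
    simp only [he_def, Option.elim]
    split_ifs with h
    · exact le_refl _
    · exact min_le_left _ _
  have hzw : ∀ i, d i ≠ -(D:ℂ) - 1 → ‖z‖ < ‖(D:ℂ) + d i + 1‖ := by
    intro i h
    refine lt_of_lt_of_le (lt_of_lt_of_le hzε (hεle (some i))) ?_
    simp only [he_def, Option.elim, if_neg h]
    exact min_le_right _ _
  have hne : ∀ i, (D:ℂ) + d i + z + 1 ≠ 0 := by
    intro i
    by_cases h : d i = -(D:ℂ) - 1
    · intro hc
      apply hz0
      rw [h] at hc
      linear_combination hc
    · intro hc
      have hzw' := hzw i h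
      have : z = -((D:ℂ) + d i + 1) := by linear_combination hc
      rw [this, norm_neg] at hzw'
      exact lt_irrefl _ hzw'
  have hAs := taylor_hasSum hAd hzA
  have hRs : ∀ i, HasSum
      (fun n : ℕ => iteratedDeriv n (R i) 0 / (Nat.factorial n : ℂ) * z ^ n) (R i z) :=
    fun i => taylor_hasSum (hRd i) (hzR i)
  have hncP : ∀ i ∈ Finset.univ \ critSet D d,
      HasSum (fun n : ℕ => (∑ j ∈ Finset.range (n + 1),
          (-1 : ℂ) ^ (l i + j + 1) * ((Nat.factorial (l i + j) : ℂ) / (Nat.factorial j : ℂ)) *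
            ((D : ℂ) + d i + 1) ^ (-(l i + j + 1 : ℤ)) *
            (iteratedDeriv (n - j) (R i) 0 / (Nat.factorial (n - j) : ℂ))) * z ^ n)
        ((-1 : ℂ) ^ (l i + 1) * (Nat.factorial (l i) : ℂ) *
          ((D : ℂ) + d i + z + 1) ^ (-(l i + 1 : ℤ)) * R i z) := by
    intro i hi
    have hdi : ¬ d i = -(D:ℂ) - 1 := by
      rw [Finset.mem_sdiff] at hi
      simpa [critSet] using hi.2
    have h := nc_piece (hw_ne i hdi) (hzw i hdi)
      ((-1:ℂ) ^ (l i + 1) * (Nat.factorial (l i) : ℂ)) (l i) (hRs i)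
    have hbase : (D:ℂ) + d i + z + 1 = ((D:ℂ) + d i + 1) + z := by ring
    rw [hbase]
    convert h using 2 with n
    congr 1
    apply Finset.sum_congr rfl
    intro j _
    rw [coeff_match (l i) j]
    ring
  have hcritP : ∀ i ∈ critSet D d,
      HasSum (fun n : ℕ => (-1 : ℂ) ^ (l i + 1) * (Nat.factorial (l i) : ℂ) *
          (iteratedDeriv (n + l i + 1) (R i) 0 / (Nat.factorial (n + l i + 1) : ℂ)) * z ^ n)
        ((-1 : ℂ) ^ (l i + 1) * (Nat.factorial (l i) : ℂ) *
            ((D : ℂ) + d i + z + 1) ^ (-(l i + 1 : ℤ)) * R i z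
          - ∑ n ∈ Finset.range (l i + 1),
              (-1 : ℂ) ^ (l i + 1) * (Nat.factorial (l i) : ℂ) *
                (iteratedDeriv n (R i) 0 / (Nat.factorial n : ℂ)) * z ^ ((n : ℤ) - l i - 1)) := by
    intro i hi
    have hdi : d i = -(D:ℂ) - 1 := by simpa [critSet] using hi
    have hbase : (D:ℂ) + d i + z + 1 = z := by rw [hdi]; ring
    have h := crit_piece hz0 ((-1:ℂ) ^ (l i + 1) * (Nat.factorial (l i) : ℂ)) (l i) (hRs i)
    rw [hbase]
    exact h
  have key : HasSum (fun n : ℕ => laurentCoeff D d l A R n * z ^ n)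
      (zetaFn D d l A R z - principalPart D d l R z) := by
    have h := (hAs.add (hasSum_sum hncP)).add (hasSum_sum hcritP)
    convert h using 1
    · funext n
      simp only [laurentCoeff]
      rw [add_mul, add_mul, Finset.sum_mul, Finset.sum_mul]
    · have hsplit := Finset.sum_sdiff (f := fun i =>
        (-1 : ℂ) ^ (l i + 1) * (Nat.factorial (l i) : ℂ) *
          ((D : ℂ) + d i + z + 1) ^ (-(l i + 1 : ℤ)) * R i z)
        (Finset.subset_univ (critSet D d))
      simp only [zetaFn, principalPart, ← hsplit, Finset.sum_sub_distrib]
      ring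
  exact ⟨hne, summable_norm_iff.2 key.summable, by rw [key.tsum_eq]; ring⟩
end

section
/- Let (I, d, l, A, (R_ι)) and (I, d, l, B, (S_ι)) be two sets of finite gauged poly-log-homogeneous data over dimension D sharing the same index set, degrees and logarithmic orders, with associated ζ-functions ζ₁ and ζ₂ and critical set I₀. Assume R_ι(0) = S_ι(0) for every ι ∈ I₀. Then there exists ε > 0 such that for every z with 0 < |z| < ε: ζ₁(z) − ζ₂(z) = Σ_{ι∈I₀} Σ_{n=1}^{l_ι} (−1)^{l_ι+1} l_ι! · (R_ι − S_ι)^{(n)}(0)/n! · z^{n−l_ι−1} + Σ_{n=0}^{∞} e_n z^n, the power series converging absolutely, where e_n = (A−B)^{(n)}(0)/n! + Σ_{ι∈I∖I₀} Σ_{j=0}^{n} (−1)^{l_ι+j+1} · ((l_ι+j)!/j!) · (D + d_ι + 1)^{−(l_ι+j+1)} · (R_ι − S_ι)^{(n−j)}(0)/(n−j)! + Σ_{ι∈I₀} (−1)^{l_ι+1} l_ι! · (R_ι − S_ι)^{(n+l_ι+1)}(0)/(n+l_ι+1)!. -/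
open scoped Classical ENNReal NNReal

private lemma taylorRep (f : ℂ → ℂ) (hf : AnalyticAt ℂ f 0) :
    ∃ r : ℝ, 0 < r ∧ ∀ z : ℂ, ‖z‖ < r →
      Summable (fun n : ℕ => ‖(iteratedDeriv n f 0 / (Nat.factorial n : ℂ)) * z ^ n‖) ∧
      HasSum (fun n : ℕ => (iteratedDeriv n f 0 / (Nat.factorial n : ℂ)) * z ^ n) (f z) := by
  obtain ⟨p, hp⟩ := hf
  obtain ⟨rp, hball⟩ := hp
  obtain ⟨r, hr0, hrrp⟩ := ENNReal.lt_iff_exists_nnreal_btwn.mp hball.r_pos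
  have hcoeff : ∀ n : ℕ, p.coeff n = iteratedDeriv n f 0 / (Nat.factorial n : ℂ) := by
    intro n
    have h1 := hball.factorial_smul (1 : ℂ) n
    rw [FormalMultilinearSeries.apply_eq_pow_smul_coeff, one_pow, one_smul] at h1
    have h2 : iteratedDeriv n f 0 = iteratedFDeriv ℂ n f 0 (fun _ => 1) :=
      iteratedDeriv_eq_iteratedFDeriv ..
    rw [← h2, nsmul_eq_mul] at h1
    rw [eq_div_iff (by exact_mod_cast Nat.factorial_ne_zero n : ((Nat.factorial n : ℂ)) ≠ 0),
      ← h1, mul_comm]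
  refine ⟨r, by exact_mod_cast hr0, fun z hz => ?_⟩
  have hzr : (‖z‖₊ : ℝ≥0∞) < rp := lt_of_lt_of_le (by exact_mod_cast hz) hrrp.le
  constructor
  · have hrad : (‖z‖₊ : ℝ≥0∞) < p.radius := hzr.trans_le hball.r_le
    have hs := p.summable_norm_mul_pow (r := ‖z‖₊) hrad
    refine hs.of_nonneg_of_le (fun n => norm_nonneg _) (fun n => ?_)
    rw [← hcoeff, norm_mul, norm_pow]
    have : ‖p.coeff n‖ ≤ ‖p n‖ := by
      have h3 : ‖p n (fun _ => (1 : ℂ))‖ ≤ ‖p n‖ := by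
        simpa using (p n).le_opNorm (fun _ => (1 : ℂ))
      exact h3
    have h0 : (0:ℝ) ≤ ‖z‖ ^ n := by positivity
    calc ‖p.coeff n‖ * ‖z‖ ^ n ≤ ‖p n‖ * ‖z‖ ^ n := by gcongr
      _ = ‖p n‖ * (‖z‖₊ : ℝ) ^ n := by norm_cast
  · have hmem : z ∈ Metric.eball (0 : ℂ) rp := by
      simpa [Metric.mem_eball, edist_zero_right, enorm_eq_nnnorm] using hzr
    have := hball.hasSum hmem
    simp only [zero_add, FormalMultilinearSeries.apply_eq_pow_smul_coeff, smul_eq_mul] at this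
    have hf : (fun n : ℕ => (iteratedDeriv n f 0 / (Nat.factorial n : ℂ)) * z ^ n) =
        fun n => z ^ n * p.coeff n := funext fun n => by rw [← hcoeff]; ring
    rw [hf]; exact this

private lemma normSummable_aux {c : ℕ → ℂ} {ρ : ℝ} {z : ℂ}
    (hρ : Summable (fun j => c j * (ρ : ℂ) ^ j)) (h : ‖z‖ < ρ) :
    Summable (fun j => ‖c j * z ^ j‖) := by
  have hρ0 : 0 < ρ := lt_of_le_of_lt (norm_nonneg z) h
  have ht : Filter.Tendsto (fun j => ‖c j * (ρ : ℂ) ^ j‖) Filter.atTop (nhds 0) := by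
    simpa using hρ.tendsto_atTop_zero.norm
  obtain ⟨M, hM⟩ := ht.bddAbove_range
  refine Summable.of_nonneg_of_le (fun j => norm_nonneg _) (fun j => ?_)
    ((summable_geometric_of_lt_one (by positivity) ((div_lt_one hρ0).2 h)).mul_left M)
  have hρn : ‖(ρ : ℂ)‖ = ρ := by
    rw [Complex.norm_real, Real.norm_eq_abs, abs_of_pos hρ0]
  have key : ‖c j * z ^ j‖ = ‖c j * (ρ : ℂ) ^ j‖ * (‖z‖ / ρ) ^ j := by
    rw [norm_mul, norm_mul, norm_pow, norm_pow, hρn, div_pow, mul_assoc,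
      mul_comm (ρ ^ j), div_mul_cancel₀ _ (by positivity : ρ ^ j ≠ 0)]
  rw [key]
  have h1 : ‖c j * (ρ : ℂ) ^ j‖ ≤ M := hM ⟨j, rfl⟩
  have h2 : (0:ℝ) ≤ (‖z‖ / ρ) ^ j := by positivity
  exact mul_le_mul_of_nonneg_right h1 h2

private lemma binomRep (l : ℕ) {w z : ℂ} (hw : w ≠ 0) (hz : ‖z‖ < ‖w‖) :
    HasSum (fun j : ℕ => ((-1 : ℂ) ^ (l + j + 1) *
        ((Nat.factorial (l + j) : ℂ) / (Nat.factorial j : ℂ)) * w ^ (-(l + j + 1 : ℤ))) * z ^ j)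
      ((-1 : ℂ) ^ (l + 1) * (Nat.factorial l : ℂ) * (w + z) ^ (-(l + 1 : ℤ))) := by
  have hwpos : 0 < ‖w‖ := lt_of_le_of_lt (norm_nonneg z) hz
  have hx : ‖-(z / w)‖ < 1 := by
    rw [norm_neg, norm_div, div_lt_one hwpos]; exact hz
  have hwz : w + z ≠ 0 := by
    intro h
    have : z = -w := by linear_combination h
    rw [this, norm_neg] at hz
    exact lt_irrefl _ hz
  have h := (hasSum_choose_mul_geometric_of_norm_lt_one l hx).mul_left
    ((-1 : ℂ) ^ (l + 1) * (Nat.factorial l : ℂ) * w ^ (-(l + 1 : ℤ)))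
  have e1 : ∀ (u : ℂ) (m : ℕ), u ^ (-(m : ℤ)) = (u ^ m)⁻¹ := fun u m => by
    rw [zpow_neg, zpow_natCast]
  have e2 : ∀ (u : ℂ) (m : ℕ), u ^ (-((m : ℤ) + 1)) = (u ^ (m + 1))⁻¹ := fun u m => by
    rw [show -((m : ℤ) + 1) = -(((m + 1 : ℕ) : ℤ)) by push_cast; ring, e1]
  have e3 : ∀ (u : ℂ) (m k : ℕ), u ^ (-((m : ℤ) + (k : ℤ) + 1)) = (u ^ (m + k + 1))⁻¹ :=
    fun u m k => by
    rw [show -((m : ℤ) + (k : ℤ) + 1) = -(((m + k + 1 : ℕ) : ℤ)) by push_cast; ring, e1]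
  have hp1 : (1 : ℂ) - -(z / w) = (w + z) / w := by field_simp; ring
  have hsum_eq : (-1 : ℂ) ^ (l + 1) * (Nat.factorial l : ℂ) * (w + z) ^ (-(l + 1 : ℤ)) =
      (-1 : ℂ) ^ (l + 1) * (Nat.factorial l : ℂ) * w ^ (-(l + 1 : ℤ)) *
        (1 / (1 - -(z / w)) ^ (l + 1)) := by
    rw [e2, e2, hp1, div_pow]
    field_simp
  rw [hsum_eq]
  have hterm : ∀ j : ℕ, ((-1 : ℂ) ^ (l + j + 1) *
      ((Nat.factorial (l + j) : ℂ) / (Nat.factorial j : ℂ)) * w ^ (-(l + j + 1 : ℤ))) * z ^ j =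
      (-1 : ℂ) ^ (l + 1) * (Nat.factorial l : ℂ) * w ^ (-(l + 1 : ℤ)) *
        (((j + l).choose l : ℂ) * (-(z / w)) ^ j) := by
    intro j
    rw [e3, e2, Nat.cast_choose ℂ (Nat.le_add_left l j), Nat.add_sub_cancel,
      Nat.add_comm j l]
    have hfl : ((Nat.factorial l : ℂ)) ≠ 0 := by exact_mod_cast Nat.factorial_ne_zero l
    have hfj : ((Nat.factorial j : ℂ)) ≠ 0 := by exact_mod_cast Nat.factorial_ne_zero j
    have hfl2 : ((Nat.factorial (l + j) : ℂ)) ≠ 0 := by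
      exact_mod_cast Nat.factorial_ne_zero (l + j)
    rw [neg_pow (z / w), div_pow]
    field_simp
    ring
  rw [show (fun j : ℕ => ((-1 : ℂ) ^ (l + j + 1) *
      ((Nat.factorial (l + j) : ℂ) / (Nat.factorial j : ℂ)) * w ^ (-(l + j + 1 : ℤ))) * z ^ j) =
      (fun j : ℕ => (-1 : ℂ) ^ (l + 1) * (Nat.factorial l : ℂ) * w ^ (-(l + 1 : ℤ)) *
        (((j + l).choose l : ℂ) * (-(z / w)) ^ j)) from funext hterm]
  exact h

private lemma critPart (l : ℕ) (c : ℂ) {z : ℂ} (hz : z ≠ 0) {a : ℕ → ℂ} {Fz : ℂ}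
    (ha0 : a 0 = 0) (hs : HasSum (fun n => a n * z ^ n) Fz)
    (hns : Summable fun n => ‖a n * z ^ n‖) :
    Summable (fun n => ‖c * a (n + l + 1) * z ^ n‖) ∧
    c * z ^ (-(l + 1 : ℤ)) * Fz =
      (∑ n ∈ Finset.Icc 1 l, c * a n * z ^ ((n : ℤ) - l - 1)) +
        ∑' n : ℕ, c * a (n + l + 1) * z ^ n := by
  have hz0 : ‖z‖ ≠ 0 := by simpa using hz
  constructor
  · have s1 : Summable (fun n => ‖a (n + (l + 1)) * z ^ (n + (l + 1))‖) :=
      (summable_nat_add_iff (f := fun n => ‖a n * z ^ n‖) (l + 1)).2 hns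
    have s2 := s1.mul_left (‖c‖ * (‖z‖ ^ (l + 1))⁻¹)
    refine s2.congr fun n => ?_
    rw [← Nat.add_assoc, norm_mul, norm_mul, norm_mul, norm_pow, norm_pow,
      show ‖z‖ ^ (n + l + 1) = ‖z‖ ^ n * ‖z‖ ^ (l + 1) by rw [← pow_add, Nat.add_assoc],
      show ‖c‖ * (‖z‖ ^ (l + 1))⁻¹ * (‖a (n + l + 1)‖ * (‖z‖ ^ n * ‖z‖ ^ (l + 1))) =
        ‖c‖ * ‖a (n + l + 1)‖ * ‖z‖ ^ n * ((‖z‖ ^ (l + 1))⁻¹ * ‖z‖ ^ (l + 1)) from by ring,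
      inv_mul_cancel₀ (pow_ne_zero _ hz0), mul_one]
  · have h1 : (∑ m ∈ Finset.range (l + 1), a m * z ^ m) +
        (∑' n : ℕ, a (n + (l + 1)) * z ^ (n + (l + 1))) = Fz := by
      rw [Summable.sum_add_tsum_nat_add (l + 1) hs.summable, hs.tsum_eq]
    have hzp1 : ∀ m : ℕ, c * z ^ (-(l + 1 : ℤ)) * (a m * z ^ m) =
        c * a m * z ^ ((m : ℤ) - l - 1) := by
      intro m
      have hp : z ^ (-(l + 1 : ℤ)) * z ^ (m : ℕ) = z ^ ((m : ℤ) - l - 1) := by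
        rw [← zpow_natCast z m, ← zpow_add₀ hz]
        congr 1; push_cast; ring
      calc c * z ^ (-(l + 1 : ℤ)) * (a m * z ^ m)
          = c * a m * (z ^ (-(l + 1 : ℤ)) * z ^ m) := by ring
        _ = c * a m * z ^ ((m : ℤ) - l - 1) := by rw [hp]
    have hzp2 : ∀ n : ℕ, c * z ^ (-(l + 1 : ℤ)) * (a (n + (l + 1)) * z ^ (n + (l + 1))) =
        c * a (n + l + 1) * z ^ n := by
      intro n
      have hp : z ^ (-(l + 1 : ℤ)) * z ^ (n + (l + 1) : ℕ) = z ^ n := by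
        rw [← zpow_natCast z (n + (l + 1)), ← zpow_add₀ hz,
          show (-(l + 1 : ℤ) + ((n + (l + 1) : ℕ) : ℤ)) = (n : ℤ) by push_cast; ring,
          zpow_natCast]
      rw [show n + (l + 1) = n + l + 1 from by omega] at hp ⊢
      calc c * z ^ (-(l + 1 : ℤ)) * (a (n + l + 1) * z ^ (n + l + 1))
          = c * a (n + l + 1) * (z ^ (-(l + 1 : ℤ)) * z ^ (n + l + 1)) := by ring
        _ = c * a (n + l + 1) * z ^ n := by rw [hp]
    calc c * z ^ (-(l + 1 : ℤ)) * Fz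
        = c * z ^ (-(l + 1 : ℤ)) * ((∑ m ∈ Finset.range (l + 1), a m * z ^ m) +
            ∑' n : ℕ, a (n + (l + 1)) * z ^ (n + (l + 1))) := by rw [h1]
      _ = (∑ m ∈ Finset.range (l + 1), c * z ^ (-(l + 1 : ℤ)) * (a m * z ^ m)) +
            ∑' n : ℕ, c * z ^ (-(l + 1 : ℤ)) * (a (n + (l + 1)) * z ^ (n + (l + 1))) := by
          rw [mul_add, Finset.mul_sum, ← tsum_mul_left]
      _ = (∑ m ∈ Finset.range (l + 1), c * a m * z ^ ((m : ℤ) - l - 1)) +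
            ∑' n : ℕ, c * a (n + l + 1) * z ^ n := by
          rw [Finset.sum_congr rfl fun m _ => hzp1 m, tsum_congr hzp2]
      _ = (∑ n ∈ Finset.Icc 1 l, c * a n * z ^ ((n : ℤ) - l - 1)) +
            ∑' n : ℕ, c * a (n + l + 1) * z ^ n := by
          congr 1
          rw [Finset.sum_range_succ', ← Finset.Ico_add_one_right_eq_Icc, Finset.sum_Ico_eq_sum_range]
          simp only [ha0, mul_zero, zero_mul, add_zero, Nat.add_sub_cancel]
          exact Finset.sum_congr rfl fun j _ => by rw [Nat.add_comm 1 j]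

private lemma noncritPart (l : ℕ) {w z : ℂ} (hw : w ≠ 0) (hz : ‖z‖ < ‖w‖)
    {a : ℕ → ℂ} {Fz : ℂ} (hs : HasSum (fun n => a n * z ^ n) Fz)
    (hns : Summable fun n => ‖a n * z ^ n‖) :
    Summable (fun n => ‖(∑ j ∈ Finset.range (n + 1),
        (-1 : ℂ) ^ (l + j + 1) * ((Nat.factorial (l + j) : ℂ) / (Nat.factorial j : ℂ)) *
          w ^ (-(l + j + 1 : ℤ)) * a (n - j)) * z ^ n‖) ∧
    HasSum (fun n => (∑ j ∈ Finset.range (n + 1),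
        (-1 : ℂ) ^ (l + j + 1) * ((Nat.factorial (l + j) : ℂ) / (Nat.factorial j : ℂ)) *
          w ^ (-(l + j + 1 : ℤ)) * a (n - j)) * z ^ n)
      ((-1 : ℂ) ^ (l + 1) * (Nat.factorial l : ℂ) * (w + z) ^ (-(l + 1 : ℤ)) * Fz) := by
  set u : ℕ → ℂ := fun j => ((-1 : ℂ) ^ (l + j + 1) *
      ((Nat.factorial (l + j) : ℂ) / (Nat.factorial j : ℂ)) * w ^ (-(l + j + 1 : ℤ))) * z ^ j
    with hu_def
  have hu : HasSum u ((-1 : ℂ) ^ (l + 1) * (Nat.factorial l : ℂ) * (w + z) ^ (-(l + 1 : ℤ))) :=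
    binomRep l hw hz
  -- norm summability of u via an intermediate radius
  have hρ : ‖z‖ < (‖z‖ + ‖w‖) / 2 := by linarith
  have hρw : (‖z‖ + ‖w‖) / 2 < ‖w‖ := by linarith
  have hρ0 : (0:ℝ) ≤ (‖z‖ + ‖w‖) / 2 := by positivity
  have hρn : ‖(((‖z‖ + ‖w‖) / 2 : ℝ) : ℂ)‖ < ‖w‖ := by
    rw [Complex.norm_real, Real.norm_eq_abs, abs_of_nonneg hρ0]; exact hρw
  have hun : Summable fun j => ‖u j‖ :=
    normSummable_aux (binomRep l hw hρn).summable hρ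
  have hvn := hns
  have key := hasSum_sum_range_mul_of_summable_norm hun hvn
  have hterm : ∀ n : ℕ, (∑ k ∈ Finset.range (n + 1), u k * (a (n - k) * z ^ (n - k))) =
      (∑ j ∈ Finset.range (n + 1),
        (-1 : ℂ) ^ (l + j + 1) * ((Nat.factorial (l + j) : ℂ) / (Nat.factorial j : ℂ)) *
          w ^ (-(l + j + 1 : ℤ)) * a (n - j)) * z ^ n := by
    intro n
    rw [Finset.sum_mul]
    refine Finset.sum_congr rfl fun k hk => ?_
    have hkn : k ≤ n := by
      have := Finset.mem_range.mp hk; omega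
    have hzp : z ^ k * z ^ (n - k) = z ^ n := by
      rw [← pow_add]; congr 1; omega
    rw [hu_def]
    calc ((-1 : ℂ) ^ (l + k + 1) * ((Nat.factorial (l + k) : ℂ) / (Nat.factorial k : ℂ)) *
          w ^ (-(l + k + 1 : ℤ)) * z ^ k) * (a (n - k) * z ^ (n - k))
        = (-1 : ℂ) ^ (l + k + 1) * ((Nat.factorial (l + k) : ℂ) / (Nat.factorial k : ℂ)) *
          w ^ (-(l + k + 1 : ℤ)) * a (n - k) * (z ^ k * z ^ (n - k)) := by ring
      _ = (-1 : ℂ) ^ (l + k + 1) * ((Nat.factorial (l + k) : ℂ) / (Nat.factorial k : ℂ)) *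
          w ^ (-(l + k + 1 : ℤ)) * a (n - k) * z ^ n := by rw [hzp]
  constructor
  · have := summable_norm_sum_mul_range_of_summable_norm hun hvn
    refine this.congr fun n => ?_
    rw [hterm n]
  · have h2 := key
    rw [hu.tsum_eq, hs.tsum_eq] at h2
    rw [show (fun n => (∑ j ∈ Finset.range (n + 1),
        (-1 : ℂ) ^ (l + j + 1) * ((Nat.factorial (l + j) : ℂ) / (Nat.factorial j : ℂ)) *
          w ^ (-(l + j + 1 : ℤ)) * a (n - j)) * z ^ n) =
      (fun n => ∑ k ∈ Finset.range (n + 1), u k * (a (n - k) * z ^ (n - k))) from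
      funext fun n => (hterm n).symm]
    exact h2


/-- Trace-defect formula: Laurent expansion at `0` of the difference of the ζ-functions of
two sets of finite gauged poly-log-homogeneous data sharing the same index set, degrees and
logarithmic orders, whose residues agree at `0` on the critical set. -/
theorem stmt_5 {I : Type*} [Fintype I] (D : ℕ) (d : I → ℂ) (l : I → ℕ)
    (hinj : Function.Injective fun i => (d i, l i))
    (A B : ℂ → ℂ) (R S : I → ℂ → ℂ)
    (hA : AnalyticAt ℂ A 0) (hR : ∀ i, AnalyticAt ℂ (R i) 0)
    (hB : AnalyticAt ℂ B 0) (hS : ∀ i, AnalyticAt ℂ (S i) 0)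
    (hRS : ∀ i ∈ critSet D d, R i 0 = S i 0) :
    ∃ ε > 0, ∀ z : ℂ, 0 < ‖z‖ → ‖z‖ < ε →
      Summable (fun n : ℕ =>
        ‖laurentCoeff D d l (fun w => A w - B w) (fun i w => R i w - S i w) n * z ^ n‖) ∧
      zetaFn D d l A R z - zetaFn D d l B S z =
        (∑ i ∈ critSet D d, ∑ n ∈ Finset.Icc 1 (l i),
          (-1 : ℂ) ^ (l i + 1) * (Nat.factorial (l i) : ℂ) *
            (iteratedDeriv n (fun w => R i w - S i w) 0 / (Nat.factorial n : ℂ)) *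
            z ^ ((n : ℤ) - l i - 1)) +
        ∑' n : ℕ,
          laurentCoeff D d l (fun w => A w - B w) (fun i w => R i w - S i w) n * z ^ n := by
  classical
  have hFan : ∀ i, AnalyticAt ℂ (fun w => R i w - S i w) 0 := fun i => (hR i).sub (hS i)
  have hGan : AnalyticAt ℂ (fun w => A w - B w) 0 := hA.sub hB
  obtain ⟨rG, hrG0, hGrep⟩ := taylorRep (fun w => A w - B w) hGan
  choose rF hrF0 hFrep using fun i => taylorRep (fun w => R i w - S i w) (hFan i)
  have hwne : ∀ i, i ∉ critSet D d → (D : ℂ) + d i + 1 ≠ 0 := by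
    intro i hi h
    exact hi (by
      simp only [critSet, Finset.mem_filter, Finset.mem_univ, true_and]
      linear_combination h)
  obtain ⟨ε, hε0, hεG, hεm⟩ :
      ∃ ε : ℝ, 0 < ε ∧ ε ≤ rG ∧ ∀ i, ε ≤ min (rF i)
        (if i ∈ critSet D d then rF i else ‖(D : ℂ) + d i + 1‖) := by
    set m : I → ℝ := fun i => min (rF i)
      (if i ∈ critSet D d then rF i else ‖(D : ℂ) + d i + 1‖) with hm
    have hmpos : ∀ i, 0 < m i := by
      intro i
      refine lt_min (hrF0 i) ?_
      split_ifs with h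
      · exact hrF0 i
      · exact norm_pos_iff.mpr (hwne i h)
    rcases isEmpty_or_nonempty I with hI | hI
    · exact ⟨rG, hrG0, le_refl _, fun i => isEmptyElim i⟩
    · refine ⟨min rG (Finset.univ.inf' Finset.univ_nonempty m), lt_min hrG0 ?_,
        min_le_left _ _, fun i => le_trans (min_le_right _ _)
          (Finset.inf'_le m (Finset.mem_univ i))⟩
      rw [Finset.lt_inf'_iff]
      exact fun i _ => hmpos i
  refine ⟨ε, hε0, fun z hz0 hzε => ?_⟩
  have hzne : z ≠ 0 := norm_pos_iff.mp hz0
  have hzrG : ‖z‖ < rG := lt_of_lt_of_le hzε hεG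
  have hzrF : ∀ i, ‖z‖ < rF i := fun i => lt_of_lt_of_le hzε ((hεm i).trans (min_le_left _ _))
  have hzw : ∀ i, i ∉ critSet D d → ‖z‖ < ‖(D : ℂ) + d i + 1‖ := by
    intro i hi
    have h2 := (hεm i).trans (min_le_right _ _)
    rw [if_neg hi] at h2
    exact lt_of_lt_of_le hzε h2
  have hGz := hGrep z hzrG
  have hFz := fun i => hFrep i z (hzrF i)
  -- noncritical indices
  have hNC : ∀ i ∈ Finset.univ \ critSet D d,
      Summable (fun n : ℕ => ‖(∑ j ∈ Finset.range (n + 1), (-1 : ℂ) ^ (l i + j + 1) * ((Nat.factorial (l i + j) : ℂ) / (Nat.factorial j : ℂ)) * ((D : ℂ) + d i + 1) ^ (-(l i + j + 1 : ℤ)) * (iteratedDeriv (n - j) (fun w => R i w - S i w) 0 / (Nat.factorial (n - j) : ℂ))) * z ^ n‖) ∧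
      HasSum (fun n : ℕ => (∑ j ∈ Finset.range (n + 1), (-1 : ℂ) ^ (l i + j + 1) * ((Nat.factorial (l i + j) : ℂ) / (Nat.factorial j : ℂ)) * ((D : ℂ) + d i + 1) ^ (-(l i + j + 1 : ℤ)) * (iteratedDeriv (n - j) (fun w => R i w - S i w) 0 / (Nat.factorial (n - j) : ℂ))) * z ^ n) ((-1 : ℂ) ^ (l i + 1) * (Nat.factorial (l i) : ℂ) * ((D : ℂ) + d i + z + 1) ^ (-(l i + 1 : ℤ)) * (R i z - S i z)) := by
    intro i hi
    have hw := hwne i (Finset.mem_sdiff.mp hi).2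
    have h := noncritPart (l i) hw (hzw i (Finset.mem_sdiff.mp hi).2)
      (a := fun n => iteratedDeriv n (fun w => R i w - S i w) 0 / (Nat.factorial n : ℂ))
      (hFz i).2 (hFz i).1
    rw [show (D : ℂ) + d i + 1 + z = (D : ℂ) + d i + z + 1 from by ring] at h
    exact h
  -- critical indices
  have hC : ∀ i ∈ critSet D d,
      Summable (fun n : ℕ => ‖(-1 : ℂ) ^ (l i + 1) * (Nat.factorial (l i) : ℂ) * (iteratedDeriv (n + l i + 1) (fun w => R i w - S i w) 0 / (Nat.factorial (n + l i + 1) : ℂ)) * z ^ n‖) ∧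
      (-1 : ℂ) ^ (l i + 1) * (Nat.factorial (l i) : ℂ) * ((D : ℂ) + d i + z + 1) ^ (-(l i + 1 : ℤ)) * (R i z - S i z) =
        (∑ n ∈ Finset.Icc 1 (l i), (-1 : ℂ) ^ (l i + 1) * (Nat.factorial (l i) : ℂ) * (iteratedDeriv n (fun w => R i w - S i w) 0 / (Nat.factorial n : ℂ)) * z ^ ((n : ℤ) - l i - 1)) + ∑' n : ℕ, (-1 : ℂ) ^ (l i + 1) * (Nat.factorial (l i) : ℂ) * (iteratedDeriv (n + l i + 1) (fun w => R i w - S i w) 0 / (Nat.factorial (n + l i + 1) : ℂ)) * z ^ n := by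
    intro i hi
    have hdi : d i = -(D : ℂ) - 1 := (Finset.mem_filter.mp hi).2
    have ha0 : iteratedDeriv 0 (fun w => R i w - S i w) 0 / (Nat.factorial 0 : ℂ) = 0 := by
      simp [iteratedDeriv_zero, sub_eq_zero.mpr (hRS i hi)]
    have h := critPart (l i) ((-1 : ℂ) ^ (l i + 1) * (Nat.factorial (l i) : ℂ)) hzne
      (a := fun n => iteratedDeriv n (fun w => R i w - S i w) 0 / (Nat.factorial n : ℂ))
      ha0 (hFz i).2 (hFz i).1
    rw [show (D : ℂ) + d i + z + 1 = z from by rw [hdi]; ring]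
    exact h
  -- decomposition of the Laurent coefficients
  have hEdef : ∀ n : ℕ, laurentCoeff D d l (fun w => A w - B w) (fun i w => R i w - S i w) n * z ^ n
      = iteratedDeriv n (fun w => A w - B w) 0 / (Nat.factorial n : ℂ) * z ^ n
        + ((∑ i ∈ Finset.univ \ critSet D d, (∑ j ∈ Finset.range (n + 1), (-1 : ℂ) ^ (l i + j + 1) * ((Nat.factorial (l i + j) : ℂ) / (Nat.factorial j : ℂ)) * ((D : ℂ) + d i + 1) ^ (-(l i + j + 1 : ℤ)) * (iteratedDeriv (n - j) (fun w => R i w - S i w) 0 / (Nat.factorial (n - j) : ℂ))) * z ^ n)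
        + ∑ i ∈ critSet D d, (-1 : ℂ) ^ (l i + 1) * (Nat.factorial (l i) : ℂ) * (iteratedDeriv (n + l i + 1) (fun w => R i w - S i w) 0 / (Nat.factorial (n + l i + 1) : ℂ)) * z ^ n) := by
    intro n
    unfold laurentCoeff
    rw [add_mul, add_mul, Finset.sum_mul, Finset.sum_mul, add_assoc]
  have se0 : Summable (fun n : ℕ => iteratedDeriv n (fun w => A w - B w) 0 / (Nat.factorial n : ℂ) * z ^ n) := hGz.2.summable
  have sNC : Summable (fun n : ℕ => ∑ i ∈ Finset.univ \ critSet D d, (∑ j ∈ Finset.range (n + 1), (-1 : ℂ) ^ (l i + j + 1) * ((Nat.factorial (l i + j) : ℂ) / (Nat.factorial j : ℂ)) * ((D : ℂ) + d i + 1) ^ (-(l i + j + 1 : ℤ)) * (iteratedDeriv (n - j) (fun w => R i w - S i w) 0 / (Nat.factorial (n - j) : ℂ))) * z ^ n) :=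
    summable_sum fun i hi => (hNC i hi).2.summable
  have sC : Summable (fun n : ℕ => ∑ i ∈ critSet D d, (-1 : ℂ) ^ (l i + 1) * (Nat.factorial (l i) : ℂ) * (iteratedDeriv (n + l i + 1) (fun w => R i w - S i w) 0 / (Nat.factorial (n + l i + 1) : ℂ)) * z ^ n) :=
    summable_sum fun i hi => ((hC i hi).1).of_norm
  constructor
  · -- summability of the norms
    have hbound : Summable (fun n : ℕ => ‖iteratedDeriv n (fun w => A w - B w) 0 / (Nat.factorial n : ℂ) * z ^ n‖
        + ((∑ i ∈ Finset.univ \ critSet D d, ‖(∑ j ∈ Finset.range (n + 1), (-1 : ℂ) ^ (l i + j + 1) * ((Nat.factorial (l i + j) : ℂ) / (Nat.factorial j : ℂ)) * ((D : ℂ) + d i + 1) ^ (-(l i + j + 1 : ℤ)) * (iteratedDeriv (n - j) (fun w => R i w - S i w) 0 / (Nat.factorial (n - j) : ℂ))) * z ^ n‖)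
        + ∑ i ∈ critSet D d, ‖(-1 : ℂ) ^ (l i + 1) * (Nat.factorial (l i) : ℂ) * (iteratedDeriv (n + l i + 1) (fun w => R i w - S i w) 0 / (Nat.factorial (n + l i + 1) : ℂ)) * z ^ n‖)) :=
      hGz.1.add ((summable_sum fun i hi => (hNC i hi).1).add
        (summable_sum fun i hi => (hC i hi).1))
    refine hbound.of_nonneg_of_le (fun n => norm_nonneg _) (fun n => ?_)
    rw [hEdef n]
    calc ‖iteratedDeriv n (fun w => A w - B w) 0 / (Nat.factorial n : ℂ) * z ^ n + ((∑ i ∈ Finset.univ \ critSet D d, (∑ j ∈ Finset.range (n + 1), (-1 : ℂ) ^ (l i + j + 1) * ((Nat.factorial (l i + j) : ℂ) / (Nat.factorial j : ℂ)) * ((D : ℂ) + d i + 1) ^ (-(l i + j + 1 : ℤ)) * (iteratedDeriv (n - j) (fun w => R i w - S i w) 0 / (Nat.factorial (n - j) : ℂ))) * z ^ n) + ∑ i ∈ critSet D d, (-1 : ℂ) ^ (l i + 1) * (Nat.factorial (l i) : ℂ) * (iteratedDeriv (n + l i + 1) (fun w => R i w - S i w) 0 / (Nat.factorial (n + l i +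 1) : ℂ)) * z ^ n)‖
        ≤ ‖iteratedDeriv n (fun w => A w - B w) 0 / (Nat.factorial n : ℂ) * z ^ n‖ + ‖(∑ i ∈ Finset.univ \ critSet D d, (∑ j ∈ Finset.range (n + 1), (-1 : ℂ) ^ (l i + j + 1) * ((Nat.factorial (l i + j) : ℂ) / (Nat.factorial j : ℂ)) * ((D : ℂ) + d i + 1) ^ (-(l i + j + 1 : ℤ)) * (iteratedDeriv (n - j) (fun w => R i w - S i w) 0 / (Nat.factorial (n - j) : ℂ))) * z ^ n) + ∑ i ∈ critSet D d, (-1 : ℂ) ^ (l i + 1) * (Nat.factorial (l i) : ℂ) * (iteratedDeriv (n + l i + 1) (fun w => R i w - S i w) 0 / (Nat.factorial (n + l i + 1) : ℂ)) * z ^ n‖ :=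
          norm_add_le _ _
      _ ≤ ‖iteratedDeriv n (fun w => A w - B w) 0 / (Nat.factorial n : ℂ) * z ^ n‖ + (‖∑ i ∈ Finset.univ \ critSet D d, (∑ j ∈ Finset.range (n + 1), (-1 : ℂ) ^ (l i + j + 1) * ((Nat.factorial (l i + j) : ℂ) / (Nat.factorial j : ℂ)) * ((D : ℂ) + d i + 1) ^ (-(l i + j + 1 : ℤ)) * (iteratedDeriv (n - j) (fun w => R i w - S i w) 0 / (Nat.factorial (n - j) : ℂ))) * z ^ n‖ + ‖∑ i ∈ critSet D d, (-1 : ℂ) ^ (l i + 1) * (Nat.factorial (l i) : ℂ) * (iteratedDeriv (n + l i + 1) (fun w => R i w - S i w) 0 / (Nat.factorial (n + l i + 1) : ℂ)) * z ^ n‖) :=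
          add_le_add_right (norm_add_le _ _) _
      _ ≤ ‖iteratedDeriv n (fun w => A w - B w) 0 / (Nat.factorial n : ℂ) * z ^ n‖ + ((∑ i ∈ Finset.univ \ critSet D d, ‖(∑ j ∈ Finset.range (n + 1), (-1 : ℂ) ^ (l i + j + 1) * ((Nat.factorial (l i + j) : ℂ) / (Nat.factorial j : ℂ)) * ((D : ℂ) + d i + 1) ^ (-(l i + j + 1 : ℤ)) * (iteratedDeriv (n - j) (fun w => R i w - S i w) 0 / (Nat.factorial (n - j) : ℂ))) * z ^ n‖) + ∑ i ∈ critSet D d, ‖(-1 : ℂ) ^ (l i + 1) * (Nat.factorial (l i) : ℂ) * (iteratedDeriv (n + l i + 1) (fun w => R i w - S i w) 0 / (Nat.factorial (n + l i + 1) : ℂ)) * z ^ n‖) :=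
          add_le_add_right (add_le_add (norm_sum_le _ _) (norm_sum_le _ _)) _
  · -- the identity
    have hsplit : zetaFn D d l A R z - zetaFn D d l B S z =
        (A z - B z) + ∑ i : I, (-1 : ℂ) ^ (l i + 1) * (Nat.factorial (l i) : ℂ) * ((D : ℂ) + d i + z + 1) ^ (-(l i + 1 : ℤ)) * (R i z - S i z) := by
      unfold zetaFn
      rw [add_sub_add_comm, ← Finset.sum_sub_distrib]
      congr 1
      exact Finset.sum_congr rfl fun i _ => by ring
    have hG0 : (∑' n : ℕ, (iteratedDeriv n (fun w => A w - B w) 0 / (Nat.factorial n : ℂ) * z ^ n)) = A z - B z := hGz.2.tsum_eq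
    have htsum : (∑' n : ℕ, laurentCoeff D d l (fun w => A w - B w) (fun i w => R i w - S i w) n * z ^ n)
        = (A z - B z) + ((∑ i ∈ Finset.univ \ critSet D d, ∑' n : ℕ, (∑ j ∈ Finset.range (n + 1), (-1 : ℂ) ^ (l i + j + 1) * ((Nat.factorial (l i + j) : ℂ) / (Nat.factorial j : ℂ)) * ((D : ℂ) + d i + 1) ^ (-(l i + j + 1 : ℤ)) * (iteratedDeriv (n - j) (fun w => R i w - S i w) 0 / (Nat.factorial (n - j) : ℂ))) * z ^ n)
          + ∑ i ∈ critSet D d, ∑' n : ℕ, (-1 : ℂ) ^ (l i + 1) * (Nat.factorial (l i) : ℂ) * (iteratedDeriv (n + l i + 1) (fun w => R i w - S i w) 0 / (Nat.factorial (n + l i + 1) : ℂ)) * z ^ n) := by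
      rw [tsum_congr hEdef, Summable.tsum_add se0 (sNC.add sC), Summable.tsum_add sNC sC,
        Summable.tsum_finsetSum (fun i hi => (hNC i hi).2.summable),
        Summable.tsum_finsetSum (fun i hi => ((hC i hi).1).of_norm), hG0]
    calc zetaFn D d l A R z - zetaFn D d l B S z
        = (A z - B z) + ∑ i : I, (-1 : ℂ) ^ (l i + 1) * (Nat.factorial (l i) : ℂ) * ((D : ℂ) + d i + z + 1) ^ (-(l i + 1 : ℤ)) * (R i z - S i z) := hsplit
      _ = (A z - B z) + ((∑ i ∈ Finset.univ \ critSet D d, (-1 : ℂ) ^ (l i + 1) * (Nat.factorial (l i) : ℂ) * ((D : ℂ) + d i + z + 1) ^ (-(l i + 1 : ℤ)) * (R i z - S i z))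
            + ∑ i ∈ critSet D d, (-1 : ℂ) ^ (l i + 1) * (Nat.factorial (l i) : ℂ) * ((D : ℂ) + d i + z + 1) ^ (-(l i + 1 : ℤ)) * (R i z - S i z)) := by
          rw [Finset.sum_sdiff (Finset.subset_univ (critSet D d))]
      _ = (A z - B z) + ((∑ i ∈ Finset.univ \ critSet D d, ∑' n : ℕ, (∑ j ∈ Finset.range (n + 1), (-1 : ℂ) ^ (l i + j + 1) * ((Nat.factorial (l i + j) : ℂ) / (Nat.factorial j : ℂ)) * ((D : ℂ) + d i + 1) ^ (-(l i + j + 1 : ℤ)) * (iteratedDeriv (n - j) (fun w => R i w - S i w) 0 / (Nat.factorial (n - j) : ℂ))) * z ^ n)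
            + ∑ i ∈ critSet D d, ((∑ n ∈ Finset.Icc 1 (l i), (-1 : ℂ) ^ (l i + 1) * (Nat.factorial (l i) : ℂ) * (iteratedDeriv n (fun w => R i w - S i w) 0 / (Nat.factorial n : ℂ)) * z ^ ((n : ℤ) - l i - 1)) + ∑' n : ℕ, (-1 : ℂ) ^ (l i + 1) * (Nat.factorial (l i) : ℂ) * (iteratedDeriv (n + l i + 1) (fun w => R i w - S i w) 0 / (Nat.factorial (n + l i + 1) : ℂ)) * z ^ n)) := by
          congr 1
          congr 1
          · exact Finset.sum_congr rfl fun i hi => ((hNC i hi).2.tsum_eq).symm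
          · exact Finset.sum_congr rfl fun i hi => (hC i hi).2
      _ = (∑ i ∈ critSet D d, (∑ n ∈ Finset.Icc 1 (l i), (-1 : ℂ) ^ (l i + 1) * (Nat.factorial (l i) : ℂ) * (iteratedDeriv n (fun w => R i w - S i w) 0 / (Nat.factorial n : ℂ)) * z ^ ((n : ℤ) - l i - 1)))
            + ((A z - B z) + ((∑ i ∈ Finset.univ \ critSet D d, ∑' n : ℕ, (∑ j ∈ Finset.range (n + 1), (-1 : ℂ) ^ (l i + j + 1) * ((Nat.factorial (l i + j) : ℂ) / (Nat.factorial j : ℂ)) * ((D : ℂ) + d i + 1) ^ (-(l i + j + 1 : ℤ)) * (iteratedDeriv (n - j) (fun w => R i w - S i w) 0 / (Nat.factorial (n - j) : ℂ))) * z ^ n)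
              + ∑ i ∈ critSet D d, ∑' n : ℕ, (-1 : ℂ) ^ (l i + 1) * (Nat.factorial (l i) : ℂ) * (iteratedDeriv (n + l i + 1) (fun w => R i w - S i w) 0 / (Nat.factorial (n + l i + 1) : ℂ)) * z ^ n)) := by
          rw [Finset.sum_add_distrib]
          ring
      _ = (∑ i ∈ critSet D d, (∑ n ∈ Finset.Icc 1 (l i), (-1 : ℂ) ^ (l i + 1) * (Nat.factorial (l i) : ℂ) * (iteratedDeriv n (fun w => R i w - S i w) 0 / (Nat.factorial n : ℂ)) * z ^ ((n : ℤ) - l i - 1)))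
            + ∑' n : ℕ, laurentCoeff D d l (fun w => A w - B w) (fun i w => R i w - S i w) n * z ^ n := by
          rw [htsum]
end

section
/- Let (I, d, l, A, (R_ι)) and (I, d, l, B, (S_ι)) be two sets of finite gauged poly-log-homogeneous data over dimension D sharing the same index set, degrees and logarithmic orders, with associated ζ-functions ζ₁ and ζ₂ and nonempty critical set I₀. Let j ∈ I₀ be the (by injectivity of ι ↦ (d_ι,l_ι), unique) critical index of maximal logarithmic order l_j. Assume R_ι(0) = S_ι(0) for all ι ∈ I₀ and R_j(0) ≠ 0. Then lim_{z→0} z^{l_j+1} ζ₁(z) = (−1)^{l_j+1} l_j! R_j(0) = lim_{z→0} z^{l_j+1} ζ₂(z), and this common limit is nonzero; in particular ζ₁ and ζ₂ have poles at 0 of the same order l_j + 1 with the same leading Laurent coefficient, i.e. the order and value of the initial Laurent coefficient of the ζ-function at zero are independent of the gauge. -/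
open scoped Classical Topology

open Filter in
lemma zeta_tendsto_aux {I : Type*} [Fintype I] (D : ℕ) (d : I → ℂ) (l : I → ℕ)
    (hinj : Function.Injective fun i => (d i, l i))
    (A : ℂ → ℂ) (R : I → ℂ → ℂ)
    (hA : AnalyticAt ℂ A 0) (hR : ∀ i, AnalyticAt ℂ (R i) 0)
    (j : I) (hj : d j = -(D : ℂ) - 1)
    (hjmax : ∀ i, d i = -(D : ℂ) - 1 → l i ≤ l j) :
    Filter.Tendsto (fun z : ℂ => z ^ (l j + 1) * zetaFn D d l A R z) (𝓝[≠] 0)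
        (𝓝 ((-1 : ℂ) ^ (l j + 1) * (Nat.factorial (l j) : ℂ) * R j 0)) := by
  have key : ∀ i : I, Tendsto (fun z : ℂ => z ^ (l j + 1) *
      ((-1 : ℂ) ^ (l i + 1) * (Nat.factorial (l i) : ℂ) *
        ((D : ℂ) + d i + z + 1) ^ (-(l i + 1 : ℤ)) * R i z)) (𝓝[≠] 0)
      (𝓝 (if i = j then (-1 : ℂ) ^ (l j + 1) * (Nat.factorial (l j) : ℂ) * R j 0 else 0)) := by
    intro i
    by_cases hdi : d i = -(D : ℂ) - 1
    · have hle : l i ≤ l j := hjmax i hdi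
      set c : ℂ := (-1 : ℂ) ^ (l i + 1) * (Nat.factorial (l i) : ℂ) with hc
      set k := l j - l i with hk
      have heq : ∀ᶠ z in 𝓝[≠] (0:ℂ), z ^ (l j + 1) *
          (c * ((D : ℂ) + d i + z + 1) ^ (-(l i + 1 : ℤ)) * R i z)
          = c * z ^ k * R i z := by
        filter_upwards [self_mem_nhdsWithin] with z hz
        have hz0 : z ≠ 0 := hz
        have hbase : (D : ℂ) + d i + z + 1 = z := by rw [hdi]; ring
        rw [hbase]
        have hzz : (z : ℂ) ^ (l j + 1) * z ^ (-(l i + 1 : ℤ)) = z ^ k := by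
          rw [← zpow_natCast z (l j + 1), ← zpow_add₀ hz0, ← zpow_natCast z k]
          congr 1
          push_cast
          omega
        calc z ^ (l j + 1) * (c * z ^ (-(l i + 1 : ℤ)) * R i z)
            = c * (z ^ (l j + 1) * z ^ (-(l i + 1 : ℤ))) * R i z := by ring
          _ = c * z ^ k * R i z := by rw [hzz]
      have hcont : Tendsto (fun z : ℂ => c * z ^ k * R i z) (𝓝[≠] 0)
          (𝓝 (c * 0 ^ k * R i 0)) := by
        apply Tendsto.mono_left _ nhdsWithin_le_nhds
        exact ((continuousAt_const.mul (continuousAt_id.pow k)).mul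
          (hR i).continuousAt).tendsto
      refine Tendsto.congr' (Filter.EventuallyEq.symm heq) ?_
      convert hcont using 2
      by_cases hij : i = j
      · subst hij
        simp [hk, hc]
      · have hlne : l i ≠ l j := by
          intro h
          exact hij (hinj (show (d i, l i) = (d j, l j) by rw [hdi, hj, h]))
        have hklt : 0 < k := by omega
        simp only [if_neg hij]
        rw [zero_pow (by omega : k ≠ 0)]
        ring
    · have hij : i ≠ j := fun h => hdi (h ▸ hj)
      have h0 : (D : ℂ) + d i + 0 + 1 ≠ 0 := by
        intro h
        apply hdi
        linear_combination h
      have hcont : ContinuousAt (fun z : ℂ =>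
          (-1 : ℂ) ^ (l i + 1) * (Nat.factorial (l i) : ℂ) *
            ((D : ℂ) + d i + z + 1) ^ (-(l i + 1 : ℤ)) * R i z) 0 := by
        refine ContinuousAt.mul ?_ (hR i).continuousAt
        refine continuousAt_const.mul ?_
        exact ContinuousAt.zpow₀ (by fun_prop) _ (Or.inl h0)
      have hpow : Tendsto (fun z : ℂ => z ^ (l j + 1)) (𝓝[≠] (0:ℂ)) (𝓝 0) := by
        have := (continuousAt_id.pow (l j + 1) : ContinuousAt (fun z : ℂ => z ^ (l j + 1)) 0)
        simpa [zero_pow (Nat.succ_ne_zero (l j))] using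
          (show Tendsto (fun z : ℂ => z ^ (l j + 1)) (𝓝[≠] (0:ℂ)) (𝓝 ((0:ℂ) ^ (l j + 1))) from this.tendsto.mono_left (nhdsWithin_le_nhds (s := {(0:ℂ)}ᶜ)))
      have := hpow.mul (hcont.tendsto.mono_left nhdsWithin_le_nhds)
      simpa [hij] using this
  have hsum : Tendsto (fun z : ℂ => ∑ i, z ^ (l j + 1) *
      ((-1 : ℂ) ^ (l i + 1) * (Nat.factorial (l i) : ℂ) *
        ((D : ℂ) + d i + z + 1) ^ (-(l i + 1 : ℤ)) * R i z)) (𝓝[≠] 0)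
      (𝓝 ((-1 : ℂ) ^ (l j + 1) * (Nat.factorial (l j) : ℂ) * R j 0)) := by
    have := tendsto_finset_sum Finset.univ (fun i _ => key i)
    simpa using this
  have hAz : Tendsto (fun z : ℂ => z ^ (l j + 1) * A z) (𝓝[≠] 0) (𝓝 0) := by
    have hpow : Tendsto (fun z : ℂ => z ^ (l j + 1)) (𝓝[≠] (0:ℂ)) (𝓝 0) := by
      have := (continuousAt_id.pow (l j + 1) : ContinuousAt (fun z : ℂ => z ^ (l j + 1)) 0)
      simpa [zero_pow (Nat.succ_ne_zero (l j))] using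
        (show Tendsto (fun z : ℂ => z ^ (l j + 1)) (𝓝[≠] (0:ℂ)) (𝓝 ((0:ℂ) ^ (l j + 1))) from this.tendsto.mono_left (nhdsWithin_le_nhds (s := {(0:ℂ)}ᶜ)))
    simpa using hpow.mul (hA.continuousAt.tendsto.mono_left nhdsWithin_le_nhds)
  have := hAz.add hsum
  simp only [zero_add] at this
  refine this.congr fun z => ?_
  simp only [zetaFn, mul_add, Finset.mul_sum]

/-- Gauge independence of the order and the value of the initial Laurent coefficient:
if `j` is the critical index of maximal logarithmic order, the critical residues of the
two gauges agree at `0`, and `R_j(0) ≠ 0`, then `z^{l_j+1} ζ₁(z)` and `z^{l_j+1} ζ₂(z)`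
both tend to the nonzero value `(−1)^{l_j+1} l_j! R_j(0)` as `z → 0`, `z ≠ 0`. -/
theorem stmt_6 {I : Type*} [Fintype I] (D : ℕ) (d : I → ℂ) (l : I → ℕ)
    (hinj : Function.Injective fun i => (d i, l i))
    (A B : ℂ → ℂ) (R S : I → ℂ → ℂ)
    (hA : AnalyticAt ℂ A 0) (hR : ∀ i, AnalyticAt ℂ (R i) 0)
    (hB : AnalyticAt ℂ B 0) (hS : ∀ i, AnalyticAt ℂ (S i) 0)
    (j : I) (hj : d j = -(D : ℂ) - 1)
    (hjmax : ∀ i, d i = -(D : ℂ) - 1 → l i ≤ l j)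
    (hRS : ∀ i, d i = -(D : ℂ) - 1 → R i 0 = S i 0)
    (hRj : R j 0 ≠ 0) :
    Filter.Tendsto (fun z : ℂ => z ^ (l j + 1) * zetaFn D d l A R z) (𝓝[≠] 0)
        (𝓝 ((-1 : ℂ) ^ (l j + 1) * (Nat.factorial (l j) : ℂ) * R j 0)) ∧
      Filter.Tendsto (fun z : ℂ => z ^ (l j + 1) * zetaFn D d l B S z) (𝓝[≠] 0)
        (𝓝 ((-1 : ℂ) ^ (l j + 1) * (Nat.factorial (l j) : ℂ) * R j 0)) ∧
      (-1 : ℂ) ^ (l j + 1) * (Nat.factorial (l j) : ℂ) * R j 0 ≠ 0 := by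
  refine ⟨zeta_tendsto_aux D d l hinj A R hA hR j hj hjmax, ?_, ?_⟩
  · have h2 := zeta_tendsto_aux D d l hinj B S hB hS j hj hjmax
    rwa [← hRS j hj] at h2
  · exact mul_ne_zero (mul_ne_zero (pow_ne_zero _ (by norm_num))
      (Nat.cast_ne_zero.mpr (Nat.factorial_ne_zero _))) hRj
end

section
/- Let n ≥ 1, let d, z ∈ ℂ and k ∈ ℕ, let a : ℝⁿ∖{0} → ℂ be continuous and homogeneous of degree d, and let T be an invertible linear endomorphism of ℝⁿ. Then ∫_{S^{n−1}} a(Tξ) · ‖Tξ‖^z · (log ‖Tξ‖)^k dσ(ξ) = (−1)^k · |det T|^{−1} · ∫_{S^{n−1}} a(ξ) · ‖T^{−1}ξ‖^{−n−d−z} · (log ‖T^{−1}ξ‖)^k dσ(ξ). -/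
open MeasureTheory
open Metric Set intervalIntegral

noncomputable section SphericalCoVAux

variable {n : ℕ}

local notation "E'" => EuclideanSpace ℝ (Fin n)

-- inner conversion: integral over volumeIoiPow as weighted integral over Ioi 0
lemma aux_volumeIoiPow_integral (m : ℕ) (h : ℝ → ℂ) :
    ∫ r : Ioi (0:ℝ), h r.1 ∂(Measure.volumeIoiPow m)
      = ∫ r in Ioi (0:ℝ), r ^ m • h r := by
  rw [Measure.volumeIoiPow]
  simp only [ENNReal.ofReal]
  rw [integral_withDensity_eq_integral_smul
      ((measurable_subtype_coe.pow_const _).real_toNNReal),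
    integral_subtype_comap measurableSet_Ioi fun a : ℝ ↦ Real.toNNReal (a ^ m) • h a]
  refine setIntegral_congr_fun measurableSet_Ioi fun x hx ↦ ?_
  rw [NNReal.smul_def, Real.coe_toNNReal _ (pow_nonneg hx.out.le _)]

-- polar decomposition for a general function
lemma aux_polar (hn : 1 ≤ n) (g : E' → ℂ)
    (hg : Integrable
      (fun p : sphere (0:E') 1 × Ioi (0:ℝ) => g (p.2.1 • p.1.1))
      ((volume : Measure E').toSphere.prod (Measure.volumeIoiPow (n-1)))) :
    ∫ x, g x = ∫ ξ : sphere (0:E') 1,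
      (∫ r in Ioi (0:ℝ), r ^ (n-1) • g (r • (ξ:E'))) ∂(volume : Measure E').toSphere := by
  have hdim : Module.finrank ℝ E' = n := finrank_euclideanSpace_fin
  haveI : Nontrivial E' := Module.nontrivial_of_finrank_pos (R := ℝ) (by rw [hdim]; omega)
  have h0 : (∫ x, g x ∂(volume : Measure E'))
      = ∫ x : ({0}ᶜ : Set E'), g x.1 ∂((volume : Measure E').comap Subtype.val) := by
    rw [integral_subtype_comap (measurableSet_singleton _).compl fun x ↦ g x,
      restrict_compl_singleton]
  have hmp := (volume : Measure E').measurePreserving_homeomorphUnitSphereProd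
  rw [hdim] at hmp
  have h1 : (∫ x : ({0}ᶜ : Set E'), g x.1 ∂((volume : Measure E').comap Subtype.val))
      = ∫ p : sphere (0:E') 1 × Ioi (0:ℝ), g (p.2.1 • p.1.1)
          ∂((volume : Measure E').toSphere.prod (Measure.volumeIoiPow (n-1))) := by
    rw [← hmp.integral_comp (Homeomorph.measurableEmbedding _)
      (fun p : sphere (0:E') 1 × Ioi (0:ℝ) => g (p.2.1 • p.1.1))]
    refine integral_congr_ae (Filter.Eventually.of_forall fun x => ?_)
    simp only [homeomorphUnitSphereProd_apply_fst_coe, homeomorphUnitSphereProd_apply_snd_coe]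
    rw [smul_inv_smul₀ (norm_ne_zero_iff.2 x.2)]
  rw [h0, h1, integral_prod _ hg]
  refine integral_congr_ae (Filter.Eventually.of_forall fun ξ => ?_)
  exact aux_volumeIoiPow_integral (n-1) (fun r => g (r • (ξ:E')))

-- change of variables by a linear equivalence
lemma aux_cov (T : E' ≃ₗ[ℝ] E') (g : E' → ℂ) :
    ∫ x, g (T x) = |LinearMap.det (T : E' →ₗ[ℝ] E')|⁻¹ • ∫ x, g x := by
  have hdet : LinearMap.det (T : E' →ₗ[ℝ] E') ≠ 0 :=
    isUnit_iff_ne_zero.1 T.isUnit_det'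
  have hemb : MeasurableEmbedding (T : E' → E') :=
    T.toContinuousLinearEquiv.toHomeomorph.measurableEmbedding
  have hmap : Measure.map (T : E' → E') (volume : Measure E')
      = ENNReal.ofReal |(LinearMap.det (T : E' →ₗ[ℝ] E'))⁻¹| • (volume : Measure E') := by
    have := Measure.map_linearMap_addHaar_eq_smul_addHaar (volume : Measure E') hdet
    simpa using this
  rw [← hemb.integral_map, hmap, MeasureTheory.integral_smul_measure,
    ENNReal.toReal_ofReal (abs_nonneg _), abs_inv]

lemma aux_key (hn : 1 ≤ n) (e : ℂ) (b : E' → ℂ)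
    (hb_cont : ContinuousOn b {(0:E')}ᶜ)
    (hb_hom : ∀ t : ℝ, 0 < t → ∀ x : E', x ≠ 0 → b (t • x) = (t:ℂ) ^ e * b x)
    (S : E' ≃ₗ[ℝ] E') :
    ∫ x, (Set.indicator {y : E' | ‖y‖ ∈ Ioc (1:ℝ) 2}
        (fun y => b y * ((‖y‖ : ℂ)) ^ (-(n:ℂ) - e))) (S x)
      = Real.log 2 • ∫ ξ : sphere (0:E') 1,
          b (S (ξ:E')) * ((‖S (ξ:E')‖ : ℂ)) ^ (-(n:ℂ) - e)
          ∂(volume : Measure E').toSphere := by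
  have hdim : Module.finrank ℝ E' = n := finrank_euclideanSpace_fin
  haveI : Nontrivial E' := Module.nontrivial_of_finrank_pos (R := ℝ) (by rw [hdim]; omega)
  set w : ℂ := -(n:ℂ) - e with hw
  set A : Set E' := {y : E' | ‖y‖ ∈ Ioc (1:ℝ) 2} with hA_def
  set g : E' → ℂ := fun y => b y * ((‖y‖ : ℂ)) ^ w with hg_def
  set f : E' → ℂ := A.indicator g with hf_def
  have hA : MeasurableSet A := continuous_norm.measurable measurableSet_Ioc
  have hSc : Continuous (S : E' → E') := (S : E' →ₗ[ℝ] E').continuous_of_finiteDimensional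
  have hg_cont : ContinuousOn g {(0:E')}ᶜ := by
    refine hb_cont.mul (fun x hx => ContinuousAt.continuousWithinAt ?_)
    have hx0 : (0:ℝ) < ‖x‖ := norm_pos_iff.2 hx
    have hca1 : ContinuousAt (fun y : E' => ((‖y‖ : ℝ) : ℂ)) x := by fun_prop
    exact ContinuousAt.cpow hca1 continuousAt_const (Complex.ofReal_mem_slitPlane.2 hx0)
  -- integrability of f ∘ S on E'
  set C : Set E' := {y : E' | ‖y‖ ∈ Icc (1:ℝ) 2} with hC_def
  have hCcpt : IsCompact C := by
    refine Metric.isCompact_of_isClosed_isBounded (isClosed_Icc.preimage continuous_norm) ?_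
    refine (Metric.isBounded_closedBall (x := (0:E')) (r := 2)).subset ?_
    intro y hy
    simpa [mem_closedBall, dist_zero_right] using hy.2
  have hpre : S ⁻¹' C = S.symm '' C := by
    ext x
    constructor
    · intro hx
      have h' := mem_image_of_mem (S.symm : E' → E') (mem_preimage.1 hx)
      rwa [LinearEquiv.symm_apply_apply] at h'
    · rintro ⟨y, hy, hyx⟩
      rw [← hyx]
      show S (S.symm y) ∈ C
      simpa using hy
  have hKcpt : IsCompact (S ⁻¹' C) := by
    rw [hpre]
    exact hCcpt.image (S.symm : E' →ₗ[ℝ] E').continuous_of_finiteDimensional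
  have hKne : ∀ x ∈ S ⁻¹' C, S x ≠ 0 := by
    intro x hx h0
    have h1' : (1:ℝ) ≤ ‖S x‖ := hx.1
    rw [h0, norm_zero] at h1'
    linarith
  have hIO : IntegrableOn (fun x => g (S x)) (S ⁻¹' A) volume := by
    have hsub : A ⊆ C := by
      intro y hy
      exact ⟨hy.1.le, hy.2⟩
    refine IntegrableOn.mono_set ?_ (preimage_mono hsub)
    refine ContinuousOn.integrableOn_compact hKcpt ?_
    exact hg_cont.comp hSc.continuousOn (fun x hx => hKne x hx)
  have h1 : Integrable (fun x => f (S x)) volume := by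
    have heq : (fun x => f (S x)) = Set.indicator (S ⁻¹' A) (fun x => g (S x)) := by
      funext x
      by_cases hx : S x ∈ A
      · rw [hf_def, Set.indicator_of_mem hx, Set.indicator_of_mem (mem_preimage.2 hx)]
      · rw [hf_def, Set.indicator_of_notMem hx,
          Set.indicator_of_notMem (fun hh => hx (mem_preimage.1 hh))]
    rw [heq]
    exact hIO.integrable_indicator (hA.preimage hSc.measurable)
  -- integrability on the product
  have hmp := (volume : Measure E').measurePreserving_homeomorphUnitSphereProd
  rw [hdim] at hmp
  have h2 : Integrable (fun p : sphere (0:E') 1 × Ioi (0:ℝ) => f (S (p.2.1 • p.1.1)))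
      ((volume : Measure E').toSphere.prod (Measure.volumeIoiPow (n-1))) := by
    rw [← hmp.integrable_comp_emb (Homeomorph.measurableEmbedding _)]
    have hcomp : ((fun p : sphere (0:E') 1 × Ioi (0:ℝ) => f (S (p.2.1 • p.1.1)))
        ∘ (homeomorphUnitSphereProd E'))
        = fun x : ({0}ᶜ : Set E') => f (S x.1) := by
      funext x
      simp only [Function.comp_apply, homeomorphUnitSphereProd_apply_fst_coe,
        homeomorphUnitSphereProd_apply_snd_coe]
      rw [smul_inv_smul₀ (norm_ne_zero_iff.2 x.2)]
    rw [hcomp]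
    have h3 := (MeasurableEmbedding.subtype_coe
      (measurableSet_singleton (0:E')).compl).integrable_map_iff
      (μ := (volume : Measure E').comap Subtype.val) (g := fun x : E' => f (S x))
    rw [map_comap_subtype_coe (measurableSet_singleton (0:E')).compl,
      restrict_compl_singleton] at h3
    exact h3.1 h1
  rw [aux_polar hn _ h2, ← MeasureTheory.integral_smul]
  refine integral_congr_ae (Filter.Eventually.of_forall fun ξ => ?_)
  dsimp only
  have hξ0 : (ξ:E') ≠ 0 := ne_of_mem_sphere ξ.2 one_ne_zero
  set v : E' := S (ξ:E') with hv_def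
  have hv0 : v ≠ 0 := fun h => hξ0 (by simpa using S.map_eq_zero_iff.1 h)
  set m : ℝ := ‖v‖ with hm_def
  have hm : 0 < m := norm_pos_iff.2 hv0
  have step1 : ∀ r ∈ Ioi (0:ℝ), r ^ (n-1) • f (S (r • (ξ:E')))
      = Set.indicator (Ioc (1/m) (2/m))
          (fun r : ℝ => r⁻¹ • (b v * ((m : ℂ)) ^ w)) r := by
    intro r hr
    have hr0 : (0:ℝ) < r := hr
    have hSr : S (r • (ξ:E')) = r • v := map_smul S r _
    have hnorm : ‖(r • v : E')‖ = r * m := by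
      rw [norm_smul, Real.norm_eq_abs, abs_of_pos hr0]
    have hmem_iff : (r • v ∈ A) ↔ r ∈ Ioc (1/m) (2/m) := by
      simp only [hA_def, mem_setOf_eq, hnorm, mem_Ioc]
      exact and_congr (div_lt_iff₀ hm).symm (le_div_iff₀ hm).symm
    by_cases hc : r ∈ Ioc (1/m) (2/m)
    · rw [hSr, hf_def, Set.indicator_of_mem (hmem_iff.2 hc), Set.indicator_of_mem hc, hg_def]
      simp only []
      rw [hnorm, hb_hom r hr0 v hv0, Complex.ofReal_mul,
        Complex.mul_cpow_ofReal_nonneg hr0.le hm.le]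
      have hrC : ((r:ℝ):ℂ) ≠ 0 := Complex.ofReal_ne_zero.2 hr0.ne'
      have hcomb : ((r:ℂ)) ^ e * ((r:ℂ)) ^ w = ((r:ℂ) ^ n)⁻¹ := by
        rw [← Complex.cpow_add _ _ hrC, hw]
        have : e + (-(n:ℂ) - e) = ((-(n:ℤ) : ℤ) : ℂ) := by push_cast; ring
        rw [this, Complex.cpow_intCast, zpow_neg, zpow_natCast]
      have hpow : ((r:ℂ)) ^ n = (r:ℂ) ^ (n-1) * (r:ℂ) := by
        conv_lhs => rw [show n = (n-1)+1 by omega]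
        rw [pow_succ]
      rw [Complex.real_smul, Complex.real_smul, Complex.ofReal_pow, Complex.ofReal_inv]
      rw [show ((r:ℂ)) ^ e * b v * ((r:ℂ) ^ w * (m:ℂ) ^ w)
          = ((r:ℂ) ^ e * (r:ℂ) ^ w) * (b v * (m:ℂ) ^ w) by ring, hcomb, hpow]
      have hrn : (r:ℂ) ^ (n-1) ≠ 0 := pow_ne_zero _ hrC
      field_simp
    · rw [hSr, hf_def, Set.indicator_of_notMem (fun h => hc (hmem_iff.1 h)),
        Set.indicator_of_notMem hc, smul_zero]
  rw [setIntegral_congr_fun measurableSet_Ioi step1,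
    MeasureTheory.integral_indicator measurableSet_Ioc,
    Measure.restrict_restrict measurableSet_Ioc]
  have hinter : Ioc (1/m) (2/m) ∩ Ioi (0:ℝ) = Ioc (1/m) (2/m) := by
    refine inter_eq_left.2 (fun x hx => ?_)
    have : 0 < 1/m := by positivity
    exact lt_trans this hx.1
  rw [hinter, _root_.integral_smul_const]
  have h12 : 1/m ≤ 2/m := by
    rw [div_le_div_iff₀ hm hm]; nlinarith
  have hlog : (∫ r in Ioc (1/m) (2/m), r⁻¹) = Real.log 2 := by
    rw [← integral_of_le h12,
      integral_inv (notMem_uIcc_of_lt (by positivity) (by positivity))]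
    congr 1
    field_simp
  rw [hlog]

lemma aux_base (hn : 1 ≤ n) (e : ℂ) (b : E' → ℂ)
    (hb_cont : ContinuousOn b {(0:E')}ᶜ)
    (hb_hom : ∀ t : ℝ, 0 < t → ∀ x : E', x ≠ 0 → b (t • x) = (t:ℂ) ^ e * b x)
    (T : E' ≃ₗ[ℝ] E') :
    (∫ ξ : sphere (0:E') 1, b (T (ξ:E')) * ((‖T (ξ:E')‖ : ℂ)) ^ (-(n:ℂ) - e)
        ∂(volume : Measure E').toSphere)
      = |LinearMap.det (T : E' →ₗ[ℝ] E')|⁻¹ •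
        ∫ ξ : sphere (0:E') 1, b (ξ:E') ∂(volume : Measure E').toSphere := by
  have k1 := aux_key hn e b hb_cont hb_hom T
  have k2 := aux_key hn e b hb_cont hb_hom (LinearEquiv.refl ℝ E')
  have cov := aux_cov T (fun x => (Set.indicator {y : E' | ‖y‖ ∈ Ioc (1:ℝ) 2}
      (fun y => b y * ((‖y‖ : ℂ)) ^ (-(n:ℂ) - e))) x)
  have k2' : (∫ x, (Set.indicator {y : E' | ‖y‖ ∈ Ioc (1:ℝ) 2}
        (fun y => b y * ((‖y‖ : ℂ)) ^ (-(n:ℂ) - e))) x)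
      = Real.log 2 • ∫ ξ : sphere (0:E') 1, b (ξ:E') ∂(volume : Measure E').toSphere := by
    rw [show (∫ x, (Set.indicator {y : E' | ‖y‖ ∈ Ioc (1:ℝ) 2}
        (fun y => b y * ((‖y‖ : ℂ)) ^ (-(n:ℂ) - e))) x)
      = ∫ x, (Set.indicator {y : E' | ‖y‖ ∈ Ioc (1:ℝ) 2}
        (fun y => b y * ((‖y‖ : ℂ)) ^ (-(n:ℂ) - e))) ((LinearEquiv.refl ℝ E') x) from rfl, k2]
    congr 1
    refine integral_congr_ae (Filter.Eventually.of_forall fun ξ => ?_)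
    have hξ : ‖(ξ:E')‖ = 1 := mem_sphere_zero_iff_norm.1 ξ.2
    simp [hξ]
  rw [cov, k2'] at k1
  have hlog2 : Real.log 2 ≠ 0 := (Real.log_pos one_lt_two).ne'
  refine smul_right_injective ℂ hlog2 ?_
  show Real.log 2 • _ = Real.log 2 • _
  rw [← k1, smul_comm]

end SphericalCoVAux

/-- Change of variables by an invertible linear map in spherical integrals of
log-homogeneous functions: for `a` continuous on `ℝⁿ∖{0}` and homogeneous of degree `d`,
`∫_{S^{n−1}} a(Tξ)‖Tξ‖^z (log‖Tξ‖)^k dσ(ξ)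
  = (−1)^k |det T|⁻¹ ∫_{S^{n−1}} a(ξ)‖T⁻¹ξ‖^{−n−d−z} (log‖T⁻¹ξ‖)^k dσ(ξ)`. -/
theorem stmt_7 (n : ℕ) (hn : 1 ≤ n) (d z : ℂ) (k : ℕ)
    (a : EuclideanSpace ℝ (Fin n) → ℂ)
    (ha_cont : ContinuousOn a {(0 : EuclideanSpace ℝ (Fin n))}ᶜ)
    (ha_hom : ∀ t : ℝ, 0 < t → ∀ x : EuclideanSpace ℝ (Fin n), x ≠ 0 →
      a (t • x) = (t : ℂ) ^ d * a x)
    (T : EuclideanSpace ℝ (Fin n) ≃ₗ[ℝ] EuclideanSpace ℝ (Fin n)) :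
    (∫ ξ : Metric.sphere (0 : EuclideanSpace ℝ (Fin n)) 1,
        a (T (ξ : EuclideanSpace ℝ (Fin n))) *
          ((‖T (ξ : EuclideanSpace ℝ (Fin n))‖ : ℂ) ^ z) *
          ((Real.log ‖T (ξ : EuclideanSpace ℝ (Fin n))‖ : ℂ)) ^ k
        ∂(volume : Measure (EuclideanSpace ℝ (Fin n))).toSphere) =
      (-1 : ℂ) ^ k *
        ((|LinearMap.det
            (T : EuclideanSpace ℝ (Fin n) →ₗ[ℝ] EuclideanSpace ℝ (Fin n))|⁻¹ : ℝ) : ℂ) *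
        ∫ ξ : Metric.sphere (0 : EuclideanSpace ℝ (Fin n)) 1,
          a (ξ : EuclideanSpace ℝ (Fin n)) *
            ((‖T.symm (ξ : EuclideanSpace ℝ (Fin n))‖ : ℂ) ^ (-(n : ℂ) - d - z)) *
            ((Real.log ‖T.symm (ξ : EuclideanSpace ℝ (Fin n))‖ : ℂ)) ^ k
          ∂(volume : Measure (EuclideanSpace ℝ (Fin n))).toSphere := by
  set u : ℂ := -(n : ℂ) - d - z with hu
  set b : EuclideanSpace ℝ (Fin n) → ℂ := fun x =>
    a x * ((‖T.symm x‖ : ℂ)) ^ u * ((Real.log (‖T.symm x‖ / ‖x‖) : ℂ)) ^ k with hb_def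
  have hTs : Continuous (T.symm : EuclideanSpace ℝ (Fin n) → EuclideanSpace ℝ (Fin n)) :=
    (T.symm : EuclideanSpace ℝ (Fin n) →ₗ[ℝ] EuclideanSpace ℝ (Fin n)).continuous_of_finiteDimensional
  have hTs0 : ∀ x : EuclideanSpace ℝ (Fin n), x ≠ 0 → T.symm x ≠ 0 := by
    intro x hx h
    exact hx (by simpa using T.symm.map_eq_zero_iff.1 h)
  have hb_cont : ContinuousOn b {(0 : EuclideanSpace ℝ (Fin n))}ᶜ := by
    refine ContinuousOn.mul (ContinuousOn.mul ha_cont ?_) ?_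
    · intro x hx
      refine ContinuousAt.continuousWithinAt ?_
      have hx0 : (0:ℝ) < ‖T.symm x‖ := norm_pos_iff.2 (hTs0 x hx)
      have hca1 : ContinuousAt (fun y : EuclideanSpace ℝ (Fin n) => ((‖T.symm y‖ : ℝ) : ℂ)) x :=
        (Complex.continuous_ofReal.comp (continuous_norm.comp hTs)).continuousAt
      exact ContinuousAt.cpow hca1 continuousAt_const (Complex.ofReal_mem_slitPlane.2 hx0)
    · intro x hx
      refine ContinuousAt.continuousWithinAt ?_
      have hx0 : (0:ℝ) < ‖x‖ := norm_pos_iff.2 hx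
      have hTx0 : (0:ℝ) < ‖T.symm x‖ := norm_pos_iff.2 (hTs0 x hx)
      have hdiv : ContinuousAt (fun y : EuclideanSpace ℝ (Fin n) => ‖T.symm y‖ / ‖y‖) x :=
        ((continuous_norm.comp hTs).continuousAt).div continuous_norm.continuousAt hx0.ne'
      have hlog' : ContinuousAt
          (fun y : EuclideanSpace ℝ (Fin n) => Real.log (‖T.symm y‖ / ‖y‖)) x :=
        hdiv.log (by positivity)
      have hc : ContinuousAt
          (fun y : EuclideanSpace ℝ (Fin n) => ((Real.log (‖T.symm y‖ / ‖y‖) : ℝ) : ℂ)) x :=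
        (Complex.continuous_ofReal.continuousAt).comp hlog'
      exact hc.pow k
  have hb_hom : ∀ t : ℝ, 0 < t → ∀ x : EuclideanSpace ℝ (Fin n), x ≠ 0 →
      b (t • x) = (t : ℂ) ^ (-(n:ℂ) - z) * b x := by
    intro t ht x hx
    have htC : ((t:ℝ):ℂ) ≠ 0 := Complex.ofReal_ne_zero.2 ht.ne'
    have h1 : T.symm (t • x) = t • T.symm x := map_smul _ _ _
    have h2 : ‖(t • T.symm x : EuclideanSpace ℝ (Fin n))‖ = t * ‖T.symm x‖ := by
      rw [norm_smul, Real.norm_eq_abs, abs_of_pos ht]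
    have h3 : ‖(t • x : EuclideanSpace ℝ (Fin n))‖ = t * ‖x‖ := by
      rw [norm_smul, Real.norm_eq_abs, abs_of_pos ht]
    have hquot : (t * ‖T.symm x‖) / (t * ‖x‖) = ‖T.symm x‖ / ‖x‖ :=
      mul_div_mul_left _ _ ht.ne'
    rw [hb_def]
    simp only []
    rw [ha_hom t ht x hx, h1, h2, h3, hquot, Complex.ofReal_mul,
      Complex.mul_cpow_ofReal_nonneg ht.le (norm_nonneg _)]
    rw [show ((t:ℂ)) ^ d * a x * (((t:ℂ)) ^ u * ((‖T.symm x‖ : ℂ)) ^ u)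
          * ((Real.log (‖T.symm x‖ / ‖x‖) : ℂ)) ^ k
        = ((t:ℂ) ^ d * (t:ℂ) ^ u) * (a x * ((‖T.symm x‖ : ℂ)) ^ u
          * ((Real.log (‖T.symm x‖ / ‖x‖) : ℂ)) ^ k) from by ring,
      ← Complex.cpow_add _ _ htC, show d + u = -(n:ℂ) - z from by rw [hu]; ring]
  have hbase := aux_base hn (-(n:ℂ) - z) b hb_cont hb_hom T
  rw [show -(n:ℂ) - (-(n:ℂ) - z) = z from by ring] at hbase
  -- rewrite left side of hbase
  have hLHS : (∫ ξ : Metric.sphere (0 : EuclideanSpace ℝ (Fin n)) 1,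
      b (T (ξ : EuclideanSpace ℝ (Fin n))) * ((‖T (ξ : EuclideanSpace ℝ (Fin n))‖ : ℂ)) ^ z
      ∂(volume : Measure (EuclideanSpace ℝ (Fin n))).toSphere)
      = (-1:ℂ)^k * ∫ ξ : Metric.sphere (0 : EuclideanSpace ℝ (Fin n)) 1,
          a (T (ξ : EuclideanSpace ℝ (Fin n))) *
            ((‖T (ξ : EuclideanSpace ℝ (Fin n))‖ : ℂ) ^ z) *
            ((Real.log ‖T (ξ : EuclideanSpace ℝ (Fin n))‖ : ℂ)) ^ k
          ∂(volume : Measure (EuclideanSpace ℝ (Fin n))).toSphere := by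
    rw [← smul_eq_mul, ← MeasureTheory.integral_smul]
    refine integral_congr_ae (Filter.Eventually.of_forall fun ξ => ?_)
    have hξ : ‖(ξ : EuclideanSpace ℝ (Fin n))‖ = 1 := mem_sphere_zero_iff_norm.1 ξ.2
    have hTξ : T.symm (T (ξ : EuclideanSpace ℝ (Fin n))) = (ξ : EuclideanSpace ℝ (Fin n)) :=
      T.symm_apply_apply _
    rw [hb_def]
    simp only [hTξ, hξ]
    rw [show ((1:ℝ):ℂ) = 1 from Complex.ofReal_one, Complex.one_cpow, mul_one, one_div,
      Real.log_inv, Complex.ofReal_neg, neg_pow, smul_eq_mul]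
    ring
  have hRHS : (∫ ξ : Metric.sphere (0 : EuclideanSpace ℝ (Fin n)) 1,
      b (ξ : EuclideanSpace ℝ (Fin n))
      ∂(volume : Measure (EuclideanSpace ℝ (Fin n))).toSphere)
      = ∫ ξ : Metric.sphere (0 : EuclideanSpace ℝ (Fin n)) 1,
          a (ξ : EuclideanSpace ℝ (Fin n)) *
            ((‖T.symm (ξ : EuclideanSpace ℝ (Fin n))‖ : ℂ) ^ (-(n : ℂ) - d - z)) *
            ((Real.log ‖T.symm (ξ : EuclideanSpace ℝ (Fin n))‖ : ℂ)) ^ k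
          ∂(volume : Measure (EuclideanSpace ℝ (Fin n))).toSphere := by
    refine integral_congr_ae (Filter.Eventually.of_forall fun ξ => ?_)
    have hξ : ‖(ξ : EuclideanSpace ℝ (Fin n))‖ = 1 := mem_sphere_zero_iff_norm.1 ξ.2
    rw [hb_def]
    simp only [hξ, div_one, hu]
  rw [hLHS, hRHS, Complex.real_smul] at hbase
  have hsq : ((-1:ℂ)^k) * ((-1:ℂ)^k) = 1 := by
    rw [← pow_add, ← two_mul, pow_mul]
    norm_num
  calc (∫ ξ : Metric.sphere (0 : EuclideanSpace ℝ (Fin n)) 1,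
        a (T (ξ : EuclideanSpace ℝ (Fin n))) *
          ((‖T (ξ : EuclideanSpace ℝ (Fin n))‖ : ℂ) ^ z) *
          ((Real.log ‖T (ξ : EuclideanSpace ℝ (Fin n))‖ : ℂ)) ^ k
        ∂(volume : Measure (EuclideanSpace ℝ (Fin n))).toSphere)
      = (-1:ℂ)^k * ((-1:ℂ)^k * ∫ ξ : Metric.sphere (0 : EuclideanSpace ℝ (Fin n)) 1,
          a (T (ξ : EuclideanSpace ℝ (Fin n))) *
            ((‖T (ξ : EuclideanSpace ℝ (Fin n))‖ : ℂ) ^ z) *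
            ((Real.log ‖T (ξ : EuclideanSpace ℝ (Fin n))‖ : ℂ)) ^ k
          ∂(volume : Measure (EuclideanSpace ℝ (Fin n))).toSphere) := by
        rw [← mul_assoc, hsq, one_mul]
    _ = _ := by
        rw [hbase, ← mul_assoc]
end

section
/- Let m, N ≥ 1, let U, V ⊆ ℝᵐ be open, χ : U → V a C¹ diffeomorphism, Θ : U → GL(ℝᴺ) a continuous map into the invertible linear endomorphisms of ℝᴺ, and b : V × (ℝᴺ∖{0}) → ℂ continuous such that b(y, ·) is homogeneous of degree −N for every y ∈ V. Define a : U × (ℝᴺ∖{0}) → ℂ by a(x, ξ) := |det Θ(x)|^{−1} · |det Dχ(x)| · b(χ(x), Θ(x)^{−1} ξ). Then for every continuous compactly supported φ : V → ℂ, both iterated integrals below are finite and ∫_U ∫_{S^{N−1}} a(x, ξ) φ(χ(x)) dσ(ξ) dx = ∫_V ∫_{S^{N−1}} b(y, ξ) φ(y) dσ(ξ) dy. -/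
open MeasureTheory

open MeasureTheory Set Metric
open scoped ENNReal NNReal

noncomputable section

variable {N : ℕ}

local notation "E" N => EuclideanSpace ℝ (Fin N)

lemma polar_eq (hN : 1 ≤ N) (g : (E N) → ℂ) (hg : Integrable g) :
    ∫ x, g x = ∫ ω : sphere (0 : E N) 1,
      (∫ r in Ioi (0:ℝ), (r ^ (N - 1) : ℝ) • g (r • (ω : E N)))
      ∂(volume : Measure (E N)).toSphere := by
  haveI : Nontrivial (E N) := by
    have : 0 < Module.finrank ℝ (E N) := by simp [finrank_euclideanSpace_fin]; omega
    exact Module.nontrivial_of_finrank_pos this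
  set μ : Measure (E N) := volume
  set σ := μ.toSphere
  set n : ℕ := Module.finrank ℝ (E N) - 1 with hn
  have hdim : Module.finrank ℝ (E N) = N := finrank_euclideanSpace_fin
  set G : (sphere (0 : E N) 1 × Ioi (0:ℝ)) → ℂ := fun p => g ((p.2 : ℝ) • (p.1 : E N)) with hG
  have h1 : ∫ x, g x ∂μ = ∫ x : ({(0 : E N)}ᶜ : Set (E N)), g x.1 ∂(μ.comap (↑)) := by
    rw [integral_subtype_comap (measurableSet_singleton _).compl fun x => g x,
      MeasureTheory.restrict_compl_singleton]
  have hGcomp : ∀ x : ({(0 : E N)}ᶜ : Set (E N)),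
      G (homeomorphUnitSphereProd (E N) x) = g x.1 := by
    intro x
    simp only [hG, homeomorphUnitSphereProd_apply_snd_coe,
      homeomorphUnitSphereProd_apply_fst_coe]
    rw [smul_inv_smul₀ (norm_ne_zero_iff.2 x.2)]
  have hMP := (μ.measurePreserving_homeomorphUnitSphereProd)
  have h2 : ∫ x : ({(0 : E N)}ᶜ : Set (E N)), g x.1 ∂(μ.comap (↑))
      = ∫ p, G p ∂(σ.prod (.volumeIoiPow n)) := by
    rw [← hMP.integral_comp (Homeomorph.measurableEmbedding _) G]
    exact integral_congr_ae (Filter.Eventually.of_forall fun x => (hGcomp x).symm)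
  have hGint : Integrable G (σ.prod (.volumeIoiPow n)) := by
    rw [← hMP.integrable_comp_emb (Homeomorph.measurableEmbedding _)]
    have : Integrable (fun x : ({(0 : E N)}ᶜ : Set (E N)) => g x.1) (μ.comap (↑)) := by
      have hemb : MeasurableEmbedding ((↑) : ({(0 : E N)}ᶜ : Set (E N)) → E N) :=
        MeasurableEmbedding.subtype_coe (measurableSet_singleton _).compl
      have hmc : Measure.map ((↑) : ({(0 : E N)}ᶜ : Set (E N)) → E N) (Measure.comap (↑) μ) = μ.restrict ({(0 : E N)}ᶜ) := by
        rw [hemb.map_comap, Subtype.range_coe]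
      exact hemb.integrable_map_iff.mp (by rw [hmc]; exact hg.restrict)
    exact this.congr (Filter.Eventually.of_forall fun x => (hGcomp x).symm)
  have h3 : ∫ p, G p ∂(σ.prod (.volumeIoiPow n))
      = ∫ ω : sphere (0 : E N) 1, (∫ r : Ioi (0:ℝ), G (ω, r) ∂(.volumeIoiPow n)) ∂σ :=
    integral_prod G hGint
  have h4 : ∀ ω : sphere (0 : E N) 1, (∫ r : Ioi (0:ℝ), G (ω, r) ∂(Measure.volumeIoiPow n))
      = ∫ r in Ioi (0:ℝ), (r ^ (N-1) : ℝ) • g (r • (ω : E N)) := by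
    intro ω
    simp only [Measure.volumeIoiPow, ENNReal.ofReal]
    rw [integral_withDensity_eq_integral_smul
      ((measurable_subtype_coe.pow_const _).real_toNNReal) _,
      integral_subtype_comap measurableSet_Ioi (fun a : ℝ => (a ^ n).toNNReal • g (a • (ω : E N)))]
    refine setIntegral_congr_fun measurableSet_Ioi fun r hr => ?_
    rw [NNReal.smul_def, Real.coe_toNNReal _ (pow_nonneg hr.out.le _)]
    simp [hG, hn, hdim]
  rw [h1, h2, h3]
  exact integral_congr_ae (Filter.Eventually.of_forall fun ω => h4 ω)

/-- A continuous tent function supported in `[1,2]`. -/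
def tentψ : ℝ → ℝ := fun r => max 0 (min (r - 1) (2 - r))

lemma tentψ_cont : Continuous tentψ := by
  unfold tentψ; fun_prop

lemma tentψ_nonneg (r : ℝ) : 0 ≤ tentψ r := le_max_left _ _

lemma tentψ_eq_zero_of_le {r : ℝ} (h : r ≤ 1) : tentψ r = 0 := by
  unfold tentψ
  rw [max_eq_left]
  exact le_trans (min_le_left _ _) (by linarith)

lemma tentψ_eq_zero_of_ge {r : ℝ} (h : 2 ≤ r) : tentψ r = 0 := by
  unfold tentψ
  rw [max_eq_left]
  exact le_trans (min_le_right _ _) (by linarith)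

lemma tentψ_pos {r : ℝ} (h1 : 1 < r) (h2 : r < 2) : 0 < tentψ r := by
  unfold tentψ
  exact lt_max_iff.2 (Or.inr (lt_min (by linarith) (by linarith)))

lemma IntegrableOn.of_zero_off {α F : Type*} [MeasurableSpace α] [NormedAddCommGroup F]
    {μ : Measure α} {f : α → F} {s K : Set α} (hs : MeasurableSet s) (hK : MeasurableSet K)
    (hfK : IntegrableOn f K μ) (h0 : ∀ x ∈ s \ K, f x = 0) : IntegrableOn f s μ := by
  have h1 : IntegrableOn f (s \ K) μ :=
    (integrableOn_congr_fun (fun x hx => h0 x hx) (hs.diff hK)).mpr (integrableOn_zero)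
  exact (h1.union hfK).mono_set fun x hx => by
    by_cases hxK : x ∈ K
    · exact Or.inr hxK
    · exact Or.inl ⟨hx, hxK⟩

lemma tent_integrable : IntegrableOn (fun r : ℝ => tentψ r / r) (Ioi 0) := by
  refine IntegrableOn.of_zero_off (K := Icc (1:ℝ) 2) measurableSet_Ioi measurableSet_Icc ?_ ?_
  · refine ContinuousOn.integrableOn_compact isCompact_Icc ?_
    exact (tentψ_cont.continuousOn.div continuousOn_id
      (fun r hr => ne_of_gt (lt_of_lt_of_le one_pos hr.1)))
  · rintro r ⟨_, hr⟩
    rcases lt_or_ge r 1 with h | h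
    · rw [tentψ_eq_zero_of_le h.le, zero_div]
    · rcases le_or_gt r 2 with h2 | h2
      · exact absurd ⟨h, h2⟩ hr
      · rw [tentψ_eq_zero_of_ge h2.le, zero_div]

/-- The positive normalization constant. -/
noncomputable def tentc : ℝ := ∫ r in Ioi (0:ℝ), tentψ r / r

lemma tentc_pos : 0 < tentc := by
  rw [tentc, setIntegral_pos_iff_support_of_nonneg_ae]
  · refine lt_of_lt_of_le ?_ (measure_mono (?_ : Ioo (1:ℝ) 2 ⊆ _))
    · rw [Real.volume_Ioo]; norm_num
    · intro r hr
      refine ⟨ne_of_gt (div_pos (tentψ_pos hr.1 hr.2) (by linarith [hr.1])), by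
        show (0:ℝ) < r; linarith [hr.1]⟩
  · refine Filter.Eventually.of_forall fun r => ?_
    show (0:ℝ) ≤ tentψ r / r
    rcases le_or_gt r 1 with h | h
    · rw [tentψ_eq_zero_of_le h, zero_div]
    · exact div_nonneg (tentψ_nonneg r) (by linarith)
  · exact tent_integrable

lemma tent_scale {c : ℝ} (hc : 0 < c) :
    ∫ r in Ioi (0:ℝ), tentψ (c * r) / r = tentc := by
  have h1 : ∀ r ∈ Ioi (0:ℝ), tentψ (c * r) / r
      = c • ((fun s => tentψ s / s) (c * r)) := by
    intro r hr
    have hr0 : (r:ℝ) ≠ 0 := ne_of_gt hr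
    simp only [smul_eq_mul]
    field_simp
  rw [setIntegral_congr_fun measurableSet_Ioi h1, integral_smul,
    integral_comp_mul_left_Ioi (fun s => tentψ s / s) 0 hc, mul_zero, smul_smul,
    mul_inv_cancel₀ hc.ne', one_smul, tentc]

lemma key_lemma (hN : 1 ≤ N) (f : (E N) → ℂ) (hf : ContinuousOn f ({(0 : E N)}ᶜ))
    (hhom : ∀ t : ℝ, 0 < t → ∀ ξ : E N, ξ ≠ 0 → f (t • ξ) = ((t ^ (-(N:ℤ)) : ℝ) : ℂ) * f ξ)
    (L : ((E N) →L[ℝ] (E N))ˣ) :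
    ∫ ξ, tentψ ‖(L : (E N) →L[ℝ] (E N)) ξ‖ • f ξ
      = tentc • ∫ ω : sphere (0 : E N) 1, f ω ∂(volume : Measure (E N)).toSphere := by
  set A : (E N) →L[ℝ] (E N) := (L : (E N) →L[ℝ] (E N)) with hA
  set Ai : (E N) →L[ℝ] (E N) := ((L⁻¹ : _ˣ) : (E N) →L[ℝ] (E N)) with hAi
  have hAiA : ∀ ξ, Ai (A ξ) = ξ := fun ξ => by
    rw [← ContinuousLinearMap.mul_apply, hA, hAi, L.inv_mul, ContinuousLinearMap.one_apply]
  have hAne : ∀ ξ : E N, ξ ≠ 0 → A ξ ≠ 0 := fun ξ hξ h =>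
    hξ (by rw [← hAiA ξ, h, map_zero])
  set g : (E N) → ℂ := fun ξ => tentψ ‖A ξ‖ • f ξ with hg
  have hg0 : ∀ ξ : E N, ‖ξ‖ < (‖A‖+1)⁻¹ → g ξ = 0 := by
    intro ξ hξ
    have h1 : ‖A ξ‖ ≤ 1 := by
      have h2 := A.le_opNorm ξ
      have h3 : (0:ℝ) ≤ ‖A‖ := norm_nonneg _
      have h4 : ‖A‖ * ‖ξ‖ ≤ ‖A‖ * (‖A‖+1)⁻¹ :=
        mul_le_mul_of_nonneg_left hξ.le h3
      have h5 : ‖A‖ * (‖A‖+1)⁻¹ ≤ 1 := by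
        rw [mul_inv_le_iff₀ (by linarith)]; linarith
      linarith
    rw [hg]
    simp only [tentψ_eq_zero_of_le h1, zero_smul]
  have hgcont : Continuous g := by
    rw [continuous_iff_continuousAt]; intro ξ₀
    by_cases h0 : ξ₀ = (0 : E N)
    · subst h0
      have hev : g =ᶠ[nhds (0 : E N)] (fun _ => (0:ℂ)) := by
        filter_upwards [Metric.ball_mem_nhds (0 : E N) (inv_pos.2 (show (0:ℝ) < ‖A‖ + 1 by linarith [norm_nonneg A]))]
          with ξ hξ
        exact hg0 ξ (by rwa [mem_ball, dist_zero_right] at hξ)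
      exact continuousAt_const.congr hev.symm
    · exact ((tentψ_cont.comp (A.continuous.norm)).continuousAt).smul
        (hf.continuousAt ((isOpen_compl_singleton).mem_nhds h0))
  have hgsupp : HasCompactSupport g := by
    apply HasCompactSupport.intro (isCompact_closedBall (0 : E N) (‖Ai‖ * 2))
    intro ξ hξ
    rcases le_or_gt 2 ‖A ξ‖ with h | h
    · rw [hg]; simp only [tentψ_eq_zero_of_ge h, zero_smul]
    · exfalso
      apply hξ
      rw [mem_closedBall, dist_zero_right, ← hAiA ξ]
      calc ‖Ai (A ξ)‖ ≤ ‖Ai‖ * ‖A ξ‖ := Ai.le_opNorm _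
        _ ≤ ‖Ai‖ * 2 := by
            have : (0:ℝ) ≤ ‖Ai‖ := norm_nonneg _
            nlinarith
  have hgint : Integrable g := hgcont.integrable_of_hasCompactSupport hgsupp
  have hinner : ∀ ω : sphere (0 : E N) 1,
      (∫ r in Ioi (0:ℝ), (r ^ (N-1) : ℝ) • g (r • (ω : E N))) = tentc • f ω := by
    intro ω
    have hω : (ω : E N) ≠ 0 := ne_of_mem_sphere ω.2 one_ne_zero
    set cA := ‖A (ω : E N)‖ with hcA
    have hcpos : 0 < cA := norm_pos_iff.2 (hAne _ hω)
    have hptwise : ∀ r ∈ Ioi (0:ℝ),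
        (r ^ (N-1) : ℝ) • g (r • (ω : E N)) = (tentψ (cA * r) / r) • f (ω : E N) := by
      intro r hr
      have hr0 : (0:ℝ) < r := hr
      have hnorm : ‖A (r • (ω : E N))‖ = cA * r := by
        rw [A.map_smul, norm_smul, Real.norm_eq_abs, abs_of_pos hr0, hcA, mul_comm]
      have hhom' := hhom r hr0 (ω : E N) hω
      show (r ^ (N-1) : ℝ) • (tentψ ‖A (r • (ω : E N))‖ • f (r • (ω : E N))) = _
      rw [hnorm, hhom']
      have hzpow : ((r:ℝ) ^ (-(N:ℤ)) : ℝ) = (r ^ N)⁻¹ := by rw [zpow_neg, zpow_natCast]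
      have hcast : ((r ^ (-(N:ℤ)) : ℝ) : ℂ) * f (ω : E N)
          = ((r ^ N)⁻¹ : ℝ) • f (ω : E N) := by
        rw [hzpow, Complex.real_smul]
      rw [hcast]
      simp only [smul_smul]
      congr 1
      have hNsub : N - 1 + 1 = N := Nat.succ_pred_eq_of_pos hN
      have hrN : (r:ℝ) ^ N = r ^ (N-1) * r := by rw [← pow_succ, hNsub]
      rw [hrN]
      have h1 : (r:ℝ) ^ (N-1) ≠ 0 := pow_ne_zero _ hr0.ne'
      field_simp
    rw [setIntegral_congr_fun measurableSet_Ioi hptwise, integral_smul_const,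
      tent_scale hcpos, tentc]
  have hpol := polar_eq hN g hgint
  calc ∫ ξ, tentψ ‖(L : (E N) →L[ℝ] (E N)) ξ‖ • f ξ = ∫ ξ, g ξ := rfl
    _ = ∫ ω : sphere (0 : E N) 1,
        (∫ r in Ioi (0:ℝ), (r ^ (N-1) : ℝ) • g (r • (ω : E N)))
        ∂(volume : Measure (E N)).toSphere := hpol
    _ = ∫ ω : sphere (0 : E N) 1, tentc • f (ω : E N)
        ∂(volume : Measure (E N)).toSphere :=
        integral_congr_ae (Filter.Eventually.of_forall hinner)
    _ = tentc • ∫ ω : sphere (0 : E N) 1, f ω ∂(volume : Measure (E N)).toSphere :=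
        integral_smul _ _

lemma sphere_comp_linear (hN : 1 ≤ N) (f : (E N) → ℂ) (hf : ContinuousOn f ({(0 : E N)}ᶜ))
    (hhom : ∀ t : ℝ, 0 < t → ∀ ξ : E N, ξ ≠ 0 → f (t • ξ) = ((t ^ (-(N:ℤ)) : ℝ) : ℂ) * f ξ)
    (L : ((E N) →L[ℝ] (E N))ˣ) :
    ∫ ω : sphere (0 : E N) 1, f ((L : (E N) →L[ℝ] (E N)) ω) ∂(volume : Measure (E N)).toSphere
      = |((L : (E N) →L[ℝ] (E N)).det)|⁻¹ •
        ∫ ω : sphere (0 : E N) 1, f ω ∂(volume : Measure (E N)).toSphere := by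
  set A : (E N) →L[ℝ] (E N) := (L : (E N) →L[ℝ] (E N)) with hA
  set Ai : (E N) →L[ℝ] (E N) := ((L⁻¹ : _ˣ) : (E N) →L[ℝ] (E N)) with hAi
  have hAiA : ∀ ξ, Ai (A ξ) = ξ := fun ξ => by
    rw [← ContinuousLinearMap.mul_apply, hA, hAi, L.inv_mul, ContinuousLinearMap.one_apply]
  have hAAi : ∀ ξ, A (Ai ξ) = ξ := fun ξ => by
    rw [← ContinuousLinearMap.mul_apply, hA, hAi, L.mul_inv, ContinuousLinearMap.one_apply]
  have hAne : ∀ ξ : E N, ξ ≠ 0 → A ξ ≠ 0 := fun ξ hξ h =>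
    hξ (by rw [← hAiA ξ, h, map_zero])
  have hdet1 : A.det * Ai.det = 1 := by
    have h1 : (A * Ai) = (1 : (E N) →L[ℝ] (E N)) := L.mul_inv
    have h2 : ((A : (E N) →ₗ[ℝ] (E N)).comp (Ai : (E N) →ₗ[ℝ] (E N))).det
        = (A : (E N) →ₗ[ℝ] (E N)).det * (Ai : (E N) →ₗ[ℝ] (E N)).det :=
      LinearMap.det_comp _ _
    have h3 : (A : (E N) →ₗ[ℝ] (E N)).comp (Ai : (E N) →ₗ[ℝ] (E N))
        = ((A * Ai : (E N) →L[ℝ] (E N)) : (E N) →ₗ[ℝ] (E N)) := rfl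
    have h4 : ((1 : (E N) →L[ℝ] (E N)) : (E N) →ₗ[ℝ] (E N)) = LinearMap.id := rfl
    rw [h3, h1, h4, LinearMap.det_id] at h2
    exact h2.symm
  have hdetne : A.det ≠ 0 := by
    intro h
    rw [h, zero_mul] at hdet1
    exact zero_ne_one hdet1
  have hfA : ContinuousOn (fun ξ => f (A ξ)) ({(0 : E N)}ᶜ) := by
    refine hf.comp A.continuous.continuousOn fun ξ hξ => ?_
    exact hAne ξ hξ
  have hhomA : ∀ t : ℝ, 0 < t → ∀ ξ : E N, ξ ≠ 0 →
      (fun ξ => f (A ξ)) (t • ξ) = ((t ^ (-(N:ℤ)) : ℝ) : ℂ) * (fun ξ => f (A ξ)) ξ := by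
    intro t ht ξ hξ
    show f (A (t • ξ)) = _
    rw [A.map_smul]
    exact hhom t ht (A ξ) (hAne ξ hξ)
  have h1 := key_lemma hN (fun ξ => f (A ξ)) hfA hhomA 1
  have h2 := key_lemma hN f hf hhom L⁻¹
  have hcov : ∫ ξ, tentψ ‖Ai (A ξ)‖ • f (A ξ) = |A.det|⁻¹ • ∫ ξ, tentψ ‖Ai ξ‖ • f ξ := by
    set G : (E N) → ℂ := fun ξ => tentψ ‖Ai ξ‖ • f ξ with hG
    have hsurj : Function.Surjective (fun ξ => A ξ) := fun ξ => ⟨Ai ξ, hAAi ξ⟩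
    have himg : (fun ξ => A ξ) '' univ = univ := by
      rw [Set.image_univ, Set.range_eq_univ]; exact hsurj
    have hcv := integral_image_eq_integral_abs_det_fderiv_smul volume MeasurableSet.univ
      (fun x _ => (A.hasFDerivAt).hasFDerivWithinAt) (Function.LeftInverse.injective hAiA).injOn G
    rw [himg, setIntegral_univ, setIntegral_univ] at hcv
    have habs : |A.det| ≠ 0 := abs_ne_zero.2 hdetne
    have hGA : (fun ξ => tentψ ‖Ai (A ξ)‖ • f (A ξ)) = fun x => G (A x) := rfl
    rw [hGA, hcv, integral_smul, smul_smul, inv_mul_cancel₀ habs, one_smul]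
  have heq : ∫ ξ, tentψ ‖((1 : ((E N) →L[ℝ] (E N))ˣ) : (E N) →L[ℝ] (E N)) ξ‖ • f (A ξ)
      = ∫ ξ, tentψ ‖Ai (A ξ)‖ • f (A ξ) := by
    refine integral_congr_ae (Filter.Eventually.of_forall fun ξ => ?_)
    show tentψ ‖((1 : ((E N) →L[ℝ] (E N))ˣ) : (E N) →L[ℝ] (E N)) ξ‖ • f (A ξ)
      = tentψ ‖Ai (A ξ)‖ • f (A ξ)
    rw [hAiA ξ]
    simp [Units.val_one]
  have hmain : tentc • (∫ ω : sphere (0 : E N) 1, f (A ω) ∂(volume : Measure (E N)).toSphere)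
      = tentc • (|A.det|⁻¹ • ∫ ω : sphere (0 : E N) 1, f ω
        ∂(volume : Measure (E N)).toSphere) := by
    rw [← h1, heq, hcov, h2, smul_comm]
  exact smul_right_injective ℂ (ne_of_gt tentc_pos) hmain

lemma B_continuousOn {m : ℕ} (V : Set (EuclideanSpace ℝ (Fin m))) (hV : IsOpen V)
    (b : EuclideanSpace ℝ (Fin m) → (E N) → ℂ)
    (hbcont : ContinuousOn (fun p => b p.1 p.2) (V ×ˢ ({(0 : E N)}ᶜ))) :
    ContinuousOn (fun y => ∫ ω : sphere (0 : E N) 1, b y ω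
      ∂(volume : Measure (E N)).toSphere) V := by
  intro y₀ hy₀
  refine ContinuousAt.continuousWithinAt ?_
  obtain ⟨ε, hε, hball⟩ := (Metric.nhds_basis_closedBall.mem_iff).mp (hV.mem_nhds hy₀)
  have hsph_ne : ∀ ω : sphere (0 : E N) 1, (ω : E N) ≠ 0 := fun ω =>
    ne_of_mem_sphere ω.2 one_ne_zero
  have hKc : IsCompact ((Metric.closedBall y₀ ε) ×ˢ (sphere (0 : E N) 1)) :=
    (isCompact_closedBall _ _).prod (isCompact_sphere _ _)
  have hsub : (Metric.closedBall y₀ ε) ×ˢ (sphere (0 : E N) 1) ⊆ V ×ˢ ({(0 : E N)}ᶜ) := by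
    rintro ⟨y, ω⟩ ⟨h1, h2⟩
    exact ⟨hball h1, ne_of_mem_sphere h2 one_ne_zero⟩
  obtain ⟨M, hM⟩ := hKc.exists_bound_of_continuousOn (hbcont.mono hsub)
  apply continuousAt_of_dominated (bound := fun _ => M)
  · filter_upwards [Metric.closedBall_mem_nhds y₀ hε] with y hy
    have hyV : y ∈ V := hball hy
    exact (hbcont.comp_continuous ((continuous_const.prodMk continuous_subtype_val))
      (fun ω => ⟨hyV, hsph_ne ω⟩)).aestronglyMeasurable
  · filter_upwards [Metric.closedBall_mem_nhds y₀ hε] with y hy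
    exact Filter.Eventually.of_forall fun ω => hM (y, ↑ω) ⟨hy, ω.2⟩
  · exact integrable_const M
  · refine Filter.Eventually.of_forall fun ω => ?_
    have h1 : ContinuousAt (fun p : EuclideanSpace ℝ (Fin m) × (E N) => b p.1 p.2)
        (y₀, (ω : E N)) :=
      hbcont.continuousAt ((hV.prod isOpen_compl_singleton).mem_nhds ⟨hy₀, hsph_ne ω⟩)
    exact ContinuousAt.comp (f := fun y : EuclideanSpace ℝ (Fin m) => (y, (ω : E N))) h1
      ((continuous_id.prodMk continuous_const).continuousAt)



/-- The pulled-back amplitude `a(x,ξ) = |det Θ(x)|⁻¹ |det Dχ(x)| b(χ(x), Θ(x)⁻¹ξ)`. -/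
noncomputable def pulledBackAmplitude {m N : ℕ}
    (χ : EuclideanSpace ℝ (Fin m) → EuclideanSpace ℝ (Fin m))
    (Θ : EuclideanSpace ℝ (Fin m) →
      (EuclideanSpace ℝ (Fin N) →L[ℝ] EuclideanSpace ℝ (Fin N)))
    (b : EuclideanSpace ℝ (Fin m) → EuclideanSpace ℝ (Fin N) → ℂ)
    (x : EuclideanSpace ℝ (Fin m)) (ξ : EuclideanSpace ℝ (Fin N)) : ℂ :=
  ((|(Θ x).det|⁻¹ * |(fderiv ℝ χ x).det| : ℝ) : ℂ) * b (χ x) (Ring.inverse (Θ x) ξ)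

/-- Form-invariance of the spherical residue integral under a `C¹` change of coordinates
`χ` with fibrewise linear change of covariables `Θ(x)`, for amplitudes homogeneous of
degree `−N` in the covariable. -/
theorem stmt_8 (m N : ℕ) (hm : 1 ≤ m) (hN : 1 ≤ N)
    (U V : Set (EuclideanSpace ℝ (Fin m))) (hU : IsOpen U) (hV : IsOpen V)
    (χ : EuclideanSpace ℝ (Fin m) → EuclideanSpace ℝ (Fin m))
    (hχ : ContDiffOn ℝ 1 χ U) (hχbij : Set.BijOn χ U V)
    (hχder : ∀ x ∈ U, (fderiv ℝ χ x).det ≠ 0)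
    (Θ : EuclideanSpace ℝ (Fin m) →
      (EuclideanSpace ℝ (Fin N) →L[ℝ] EuclideanSpace ℝ (Fin N)))
    (hΘcont : ContinuousOn Θ U) (hΘinv : ∀ x ∈ U, IsUnit (Θ x))
    (b : EuclideanSpace ℝ (Fin m) → EuclideanSpace ℝ (Fin N) → ℂ)
    (hbcont : ContinuousOn (fun p => b p.1 p.2)
      (V ×ˢ ({(0 : EuclideanSpace ℝ (Fin N))}ᶜ)))
    (hbhom : ∀ y ∈ V, ∀ t : ℝ, 0 < t → ∀ ξ : EuclideanSpace ℝ (Fin N), ξ ≠ 0 →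
      b y (t • ξ) = ((t ^ (-(N : ℤ)) : ℝ) : ℂ) * b y ξ)
    (φ : EuclideanSpace ℝ (Fin m) → ℂ)
    (hφcont : Continuous φ) (hφsupp : HasCompactSupport φ)
    (hφV : tsupport φ ⊆ V) :
    IntegrableOn (fun x =>
        ∫ ξ : Metric.sphere (0 : EuclideanSpace ℝ (Fin N)) 1,
          pulledBackAmplitude χ Θ b x (ξ : EuclideanSpace ℝ (Fin N)) * φ (χ x)
          ∂(volume : Measure (EuclideanSpace ℝ (Fin N))).toSphere) U volume ∧
      IntegrableOn (fun y =>
        ∫ ξ : Metric.sphere (0 : EuclideanSpace ℝ (Fin N)) 1,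
          b y (ξ : EuclideanSpace ℝ (Fin N)) * φ y
          ∂(volume : Measure (EuclideanSpace ℝ (Fin N))).toSphere) V volume ∧
      (∫ x in U,
        ∫ ξ : Metric.sphere (0 : EuclideanSpace ℝ (Fin N)) 1,
          pulledBackAmplitude χ Θ b x (ξ : EuclideanSpace ℝ (Fin N)) * φ (χ x)
          ∂(volume : Measure (EuclideanSpace ℝ (Fin N))).toSphere) =
      ∫ y in V,
        ∫ ξ : Metric.sphere (0 : EuclideanSpace ℝ (Fin N)) 1,
          b y (ξ : EuclideanSpace ℝ (Fin N)) * φ y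
          ∂(volume : Measure (EuclideanSpace ℝ (Fin N))).toSphere := by
  have hsph_ne : ∀ ω : sphere (0 : E N) 1, (ω : E N) ≠ 0 := fun ω =>
    ne_of_mem_sphere ω.2 one_ne_zero
  set σ : Measure (sphere (0 : E N) 1) := (volume : Measure (E N)).toSphere with hσ
  set g : EuclideanSpace ℝ (Fin m) → ℂ :=
    fun y => (∫ ω : sphere (0 : E N) 1, b y ω ∂σ) * φ y with hgdef
  have hBcont : ContinuousOn (fun y => ∫ ω : sphere (0 : E N) 1, b y ω ∂σ) V :=
    B_continuousOn V hV b hbcont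
  have hgcont : ContinuousOn g V := hBcont.mul hφcont.continuousOn
  have hK : IsCompact (tsupport φ) := hφsupp
  have hgV : IntegrableOn g V volume := by
    refine IntegrableOn.of_zero_off hV.measurableSet (isClosed_tsupport φ).measurableSet ?_ ?_
    · exact (hgcont.mono hφV).integrableOn_compact hK
    · rintro y ⟨hyV, hyK⟩
      have hφ0 : φ y = 0 := image_eq_zero_of_notMem_tsupport hyK
      rw [hgdef]
      simp only [hφ0, mul_zero]
  have hident : ∀ y, (∫ ω : sphere (0 : E N) 1, b y (ω : E N) * φ y ∂σ) = g y :=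
    fun y => integral_mul_const _ _
  have hder : ∀ x ∈ U, HasFDerivWithinAt χ (fderiv ℝ χ x) U x := by
    intro x hx
    have hdiff : DifferentiableAt ℝ χ x :=
      ((hχ.differentiableOn one_ne_zero) x hx).differentiableAt (hU.mem_nhds hx)
    exact hdiff.hasFDerivAt.hasFDerivWithinAt
  have himg : χ '' U = V := hχbij.image_eq
  have hinj : Set.InjOn χ U := hχbij.injOn
  have hiff := integrableOn_image_iff_integrableOn_abs_det_fderiv_smul volume
    hU.measurableSet hder hinj g
  have hcveq := integral_image_eq_integral_abs_det_fderiv_smul volume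
    hU.measurableSet hder hinj g
  rw [himg] at hiff hcveq
  have hL : ∀ x ∈ U,
      (∫ ω : sphere (0 : E N) 1, pulledBackAmplitude χ Θ b x (ω : E N) * φ (χ x) ∂σ)
      = |(fderiv ℝ χ x).det| • g (χ x) := by
    intro x hx
    obtain ⟨u, hu⟩ := hΘinv x hx
    have hχxV : χ x ∈ V := hχbij.mapsTo hx
    have hfb : ContinuousOn (fun ξ => b (χ x) ξ) ({(0 : E N)}ᶜ) :=
      hbcont.comp ((continuous_const.prodMk continuous_id).continuousOn)
        (fun ξ hξ => ⟨hχxV, hξ⟩)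
    have hfhom : ∀ t : ℝ, 0 < t → ∀ ξ : E N, ξ ≠ 0 →
        (fun ξ => b (χ x) ξ) (t • ξ) = ((t ^ (-(N : ℤ)) : ℝ) : ℂ) * (fun ξ => b (χ x) ξ) ξ :=
      fun t ht ξ hξ => hbhom (χ x) hχxV t ht ξ hξ
    have hsph := sphere_comp_linear hN (fun ξ => b (χ x) ξ) hfb hfhom u⁻¹
    have hRinv : ((u⁻¹ : _ˣ) : (E N) →L[ℝ] (E N)) = Ring.inverse (Θ x) := by
      rw [← hu, Ring.inverse_unit]
    have hdet1 : ((u⁻¹ : _ˣ) : (E N) →L[ℝ] (E N)).det * (Θ x).det = 1 := by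
      rw [← hu]
      have h2 := LinearMap.det_comp
        ((((u⁻¹ : _ˣ) : (E N) →L[ℝ] (E N))) : (E N) →ₗ[ℝ] (E N))
        ((((u : _ˣ) : (E N) →L[ℝ] (E N))) : (E N) →ₗ[ℝ] (E N))
      have h3 : ((((u⁻¹ : _ˣ) : (E N) →L[ℝ] (E N)) : (E N) →ₗ[ℝ] (E N)).comp
          ((((u : _ˣ) : (E N) →L[ℝ] (E N))) : (E N) →ₗ[ℝ] (E N)))
          = ((1 : (E N) →L[ℝ] (E N)) : (E N) →ₗ[ℝ] (E N)) := by
        rw [← ContinuousLinearMap.toLinearMap_comp, ← ContinuousLinearMap.mul_def, u.inv_mul]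
      have h4 : ((1 : (E N) →L[ℝ] (E N)) : (E N) →ₗ[ℝ] (E N)) = LinearMap.id := rfl
      rw [h3, h4, LinearMap.det_id] at h2
      exact h2.symm
    have hdne : (Θ x).det ≠ 0 := by
      intro h
      rw [h, mul_zero] at hdet1
      exact zero_ne_one hdet1
    have habsinv : |((u⁻¹ : _ˣ) : (E N) →L[ℝ] (E N)).det|⁻¹ = |(Θ x).det| := by
      have h5 : ((u⁻¹ : _ˣ) : (E N) →L[ℝ] (E N)).det = ((Θ x).det)⁻¹ :=
        eq_inv_of_mul_eq_one_left hdet1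
      rw [h5, abs_inv, inv_inv]
    calc ∫ ω : sphere (0 : E N) 1, pulledBackAmplitude χ Θ b x (ω : E N) * φ (χ x) ∂σ
        = (∫ ω : sphere (0 : E N) 1, pulledBackAmplitude χ Θ b x (ω : E N) ∂σ) * φ (χ x) :=
          integral_mul_const _ _
      _ = (((|(Θ x).det|⁻¹ * |(fderiv ℝ χ x).det| : ℝ) : ℂ) *
          ∫ ω : sphere (0 : E N) 1, b (χ x) (Ring.inverse (Θ x) (ω : E N)) ∂σ) * φ (χ x) := by
          rw [show (∫ ω : sphere (0 : E N) 1, pulledBackAmplitude χ Θ b x (ω : E N) ∂σ)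
            = ((|(Θ x).det|⁻¹ * |(fderiv ℝ χ x).det| : ℝ) : ℂ) *
              ∫ ω : sphere (0 : E N) 1, b (χ x) (Ring.inverse (Θ x) (ω : E N)) ∂σ from
            integral_const_mul _ _]
      _ = (((|(Θ x).det|⁻¹ * |(fderiv ℝ χ x).det| : ℝ) : ℂ) *
          (|((u⁻¹ : _ˣ) : (E N) →L[ℝ] (E N)).det|⁻¹ •
            ∫ ω : sphere (0 : E N) 1, b (χ x) (ω : E N) ∂σ)) * φ (χ x) := by
          rw [← hRinv]
          rw [hsph]
      _ = |(fderiv ℝ χ x).det| • g (χ x) := by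
          rw [habsinv, hgdef]
          simp only [Complex.real_smul, Complex.ofReal_mul, Complex.ofReal_inv]
          have habs0 : ((|(Θ x).det| : ℝ) : ℂ) ≠ 0 := by
            simpa using abs_ne_zero.2 hdne
          field_simp
  refine ⟨?_, ?_, ?_⟩
  · exact (integrableOn_congr_fun hL hU.measurableSet).mpr (hiff.mp hgV)
  · exact (integrableOn_congr_fun (fun y _ => hident y) hV.measurableSet).mpr hgV
  · calc (∫ x in U, ∫ ω : sphere (0 : E N) 1,
          pulledBackAmplitude χ Θ b x (ω : E N) * φ (χ x) ∂σ)
        = ∫ x in U, |(fderiv ℝ χ x).det| • g (χ x) :=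
          setIntegral_congr_fun hU.measurableSet hL
      _ = ∫ y in V, g y := hcveq.symm
      _ = ∫ y in V, ∫ ω : sphere (0 : E N) 1, b y (ω : E N) * φ y ∂σ :=
          setIntegral_congr_fun hV.measurableSet fun y _ => (hident y).symm
end
end

section
/- Let α ∈ (−1, 0) and x ∈ ℝ with x ≠ 0. Then the improper integral lim_{R→∞} ∫_{−R}^{R} e^{−2π i x ξ} |ξ|^α dξ exists and equals 2 · sin(−απ/2) · Γ(α+1) / |2πx|^{α+1}. -/
open Filter Topology Set MeasureTheory Real intervalIntegral

lemma myMeasRpow {c : ℝ} : Measurable fun x : ℝ => x ^ c := by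
  fun_prop

-- integrability of v^(b-1)/(1+v) on Ioi 0

lemma myIntGamma {a r : ℝ} (ha : 0 < a) (hr : 0 < r) :
    IntegrableOn (fun t : ℝ => t ^ (a - 1) * Real.exp (-(r * t))) (Ioi 0) := by
  have h0 : IntegrableOn (fun x : ℝ => Real.exp (-x) * x ^ (a - 1)) (Ioi 0) :=
    Real.GammaIntegral_convergent ha
  have h1 : IntegrableOn (fun x : ℝ => Real.exp (-(r * x)) * (r * x) ^ (a - 1)) (Ioi 0) := by
    have := (integrableOn_Ioi_comp_mul_left_iff
      (fun x : ℝ => Real.exp (-x) * x ^ (a - 1)) 0 hr).mpr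
    simpa using this (by simpa using h0)
  have h2 : IntegrableOn (fun x : ℝ => r ^ (1 - a) * (Real.exp (-(r * x)) * (r * x) ^ (a - 1)))
      (Ioi 0) := h1.const_mul (r ^ (1 - a))
  refine IntegrableOn.congr_fun h2 (fun t ht => ?_) measurableSet_Ioi
  have ht0 : (0:ℝ) < t := ht
  rw [Real.mul_rpow hr.le ht0.le]
  rw [show r ^ (1 - a) * (Real.exp (-(r * t)) * (r ^ (a - 1) * t ^ (a - 1)))
      = (r ^ (1 - a) * r ^ (a - 1)) * (t ^ (a - 1) * Real.exp (-(r * t))) by ring,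
    ← Real.rpow_add hr]
  norm_num

-- Helper 2: the elementary exp*cos interval integral

lemma myExpCos (t R : ℝ) :
    ∫ u in (0:ℝ)..R, Real.exp (-(t * u)) * Real.cos u
      = (t + Real.exp (-(t * R)) * (Real.sin R - t * Real.cos R)) / (1 + t ^ 2) := by
  have h1t : (1 + t ^ 2) ≠ 0 := by positivity
  have key : ∀ u : ℝ, HasDerivAt
      (fun u => Real.exp (-(t * u)) * (Real.sin u - t * Real.cos u) / (1 + t ^ 2))
      (Real.exp (-(t * u)) * Real.cos u) u := by
    intro u
    have h1 : HasDerivAt (fun u : ℝ => -(t * u)) (-t) u := by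
      exact ((hasDerivAt_id u).const_mul t).neg.congr_deriv (by simp)
    have h2 := (Real.hasDerivAt_exp (-(t * u))).comp u h1
    have h3 : HasDerivAt (fun u : ℝ => Real.sin u - t * Real.cos u)
        (Real.cos u + t * Real.sin u) u := by
      exact ((Real.hasDerivAt_sin u).sub ((Real.hasDerivAt_cos u).const_mul t)).congr_deriv (by ring)
    have h4 := (h2.mul h3).div_const (1 + t ^ 2)
    refine h4.congr_deriv ?_
    simp only [Function.comp_apply]
    field_simp
    ring
  rw [intervalIntegral.integral_eq_sub_of_hasDerivAt (fun u _ => key u)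
    (((Real.continuous_exp.comp (by continuity)).mul Real.continuous_cos).intervalIntegrable 0 R)]
  simp [mul_comm]
  ring

lemma myIntD {b : ℝ} (hb0 : 0 < b) (hb1 : b < 1) :
    IntegrableOn (fun v : ℝ => v ^ (b - 1) / (1 + v)) (Ioi 0) := by
  have hmeas : Measurable fun v : ℝ => v ^ (b - 1) / (1 + v) :=
    myMeasRpow.div (measurable_const.add measurable_id)
  rw [← Ioc_union_Ioi_eq_Ioi (zero_le_one (α := ℝ))]
  refine IntegrableOn.union ?_ ?_
  · have hg : IntegrableOn (fun v : ℝ => v ^ (b - 1)) (Ioc 0 1) := by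
      have := (intervalIntegrable_rpow' (a := 0) (b := 1) (by linarith : (-1:ℝ) < b - 1))
      rwa [intervalIntegrable_iff_integrableOn_Ioc_of_le zero_le_one] at this
    refine Integrable.mono' hg hmeas.aestronglyMeasurable ?_
    filter_upwards [ae_restrict_mem measurableSet_Ioc] with v hv
    rw [Real.norm_eq_abs, abs_div, abs_of_nonneg (Real.rpow_nonneg hv.1.le _),
      abs_of_nonneg (by linarith [hv.1.le] : (0:ℝ) ≤ 1 + v)]
    refine div_le_of_le_mul₀ ?_ (Real.rpow_nonneg hv.1.le _) ?_
    · linarith [hv.1.le]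
    · nlinarith [Real.rpow_nonneg hv.1.le (b-1), hv.1.le]
  · have hg : IntegrableOn (fun v : ℝ => v ^ (b - 2)) (Ioi 1) :=
      integrableOn_Ioi_rpow_of_lt (by linarith) one_pos
    refine Integrable.mono' hg hmeas.aestronglyMeasurable ?_
    filter_upwards [ae_restrict_mem measurableSet_Ioi] with v hv
    have hv0 : (0:ℝ) < v := lt_trans one_pos hv
    rw [Real.norm_eq_abs, abs_div, abs_of_nonneg (Real.rpow_nonneg hv0.le _),
      abs_of_nonneg (by linarith : (0:ℝ) ≤ 1 + v)]
    rw [div_le_iff₀ (by linarith), show b - 1 = (b-2) + 1 by ring, Real.rpow_add hv0,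
      Real.rpow_one]
    nlinarith [Real.rpow_nonneg hv0.le (b-2), Real.rpow_pos_of_pos hv0 (b-2)]

-- integrability of t^a/(1+t^2) on Ioi 0

lemma myIntC {a : ℝ} (ha0 : 0 < a) (ha1 : a < 1) :
    IntegrableOn (fun t : ℝ => t ^ a / (1 + t ^ 2)) (Ioi 0) := by
  have hmeas : Measurable fun t : ℝ => t ^ a / (1 + t ^ 2) :=
    myMeasRpow.div (measurable_const.add (measurable_id.pow_const 2))
  rw [← Ioc_union_Ioi_eq_Ioi (zero_le_one (α := ℝ))]
  refine IntegrableOn.union ?_ ?_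
  · refine Integrable.mono' (g := fun _ => (1:ℝ))
      (integrableOn_const measure_Ioc_lt_top.ne) hmeas.aestronglyMeasurable ?_
    filter_upwards [ae_restrict_mem measurableSet_Ioc] with t ht
    rw [Real.norm_eq_abs, abs_div, abs_of_nonneg (Real.rpow_nonneg ht.1.le _),
      abs_of_nonneg (by positivity : (0:ℝ) ≤ 1 + t ^ 2)]
    have h1 : t ^ a ≤ 1 := Real.rpow_le_one ht.1.le ht.2 ha0.le
    refine div_le_of_le_mul₀ (by positivity) zero_le_one ?_
    nlinarith [sq_nonneg t]
  · have hg : IntegrableOn (fun t : ℝ => t ^ (a - 2)) (Ioi 1) :=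
      integrableOn_Ioi_rpow_of_lt (by linarith) one_pos
    refine Integrable.mono' hg hmeas.aestronglyMeasurable ?_
    filter_upwards [ae_restrict_mem measurableSet_Ioi] with t ht
    have ht0 : (0:ℝ) < t := lt_trans one_pos ht
    rw [Real.norm_eq_abs, abs_div, abs_of_nonneg (Real.rpow_nonneg ht0.le _),
      abs_of_nonneg (by positivity : (0:ℝ) ≤ 1 + t ^ 2)]
    rw [div_le_iff₀ (by positivity)]
    have hpow : t ^ a = t ^ (a - 2) * t ^ 2 := by
      rw [← Real.rpow_two, ← Real.rpow_add ht0]; norm_num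
    rw [hpow]
    nlinarith [Real.rpow_pos_of_pos ht0 (a-2), sq_nonneg t]

lemma myExpInt {c : ℝ} (hc : 0 < c) : ∫ w in Ioi (0:ℝ), Real.exp (-(c * w)) = 1 / c := by
  have h := Real.integral_rpow_mul_exp_neg_mul_Ioi one_pos hc
  simp only [sub_self, Real.rpow_zero, one_mul, Real.rpow_one, Real.Gamma_one, mul_one] at h
  exact h

lemma myBeta {b : ℝ} (hb0 : 0 < b) (hb1 : b < 1) :
    ∫ v in Ioi (0:ℝ), v ^ (b - 1) / (1 + v) = Real.Gamma b * Real.Gamma (1 - b) := by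
  set μ : Measure ℝ := volume.restrict (Ioi 0) with hμ
  set F : ℝ → ℝ → ℝ := fun v w => v ^ (b - 1) * Real.exp (-((1 + v) * w)) with hF
  have hmeas : AEStronglyMeasurable (Function.uncurry F) (μ.prod μ) := by
    apply Measurable.aestronglyMeasurable
    exact (myMeasRpow.comp measurable_fst).mul
      (((measurable_const.add measurable_fst).mul measurable_snd).neg.exp)
  have hinner : ∀ v : ℝ, v ∈ Ioi (0:ℝ) → (∫ w, F v w ∂μ) = v ^ (b - 1) / (1 + v) := by
    intro v hv
    have h1v : (0:ℝ) < 1 + v := by linarith [mem_Ioi.mp hv]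
    have h2 : (∫ w, F v w ∂μ) = v ^ (b - 1) * ∫ w in Ioi (0:ℝ), Real.exp (-((1 + v) * w)) := by
      simp only [hF, hμ]
      rw [MeasureTheory.integral_const_mul]
    rw [h2, myExpInt h1v, mul_one_div]
  have hint : Integrable (Function.uncurry F) (μ.prod μ) := by
    rw [integrable_prod_iff hmeas]
    constructor
    · filter_upwards [ae_restrict_mem measurableSet_Ioi] with v hv
      have h1v : (0:ℝ) < 1 + v := by linarith [mem_Ioi.mp hv]
      have h0 : IntegrableOn (fun w : ℝ => Real.exp (-(1 + v) * w)) (Ioi 0) :=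
        exp_neg_integrableOn_Ioi 0 h1v
      have h1 : IntegrableOn (fun w : ℝ => v ^ (b-1) * Real.exp (-(1 + v) * w)) (Ioi 0) :=
        h0.const_mul _
      refine IntegrableOn.congr_fun h1 (fun w hw => ?_) measurableSet_Ioi
      simp only [hF, neg_mul, Function.uncurry]
    · refine ((myIntD hb0 hb1).congr ?_ : Integrable _ μ)
      filter_upwards [ae_restrict_mem measurableSet_Ioi] with v hv
      have hv0 : (0:ℝ) < v := hv
      have h1v : (0:ℝ) < 1 + v := by linarith
      rw [← hinner v hv0]
      refine integral_congr_ae ?_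
      filter_upwards with w
      simp only [Function.uncurry, hF, Real.norm_eq_abs]
      rw [abs_of_nonneg (by positivity)]
  calc ∫ v in Ioi (0:ℝ), v ^ (b - 1) / (1 + v)
      = ∫ v, (∫ w, F v w ∂μ) ∂μ := by
        rw [hμ]
        exact (setIntegral_congr_fun measurableSet_Ioi (fun v hv => hinner v hv)).symm
    _ = ∫ w, (∫ v, F v w ∂μ) ∂μ := integral_integral_swap hint
    _ = ∫ w in Ioi (0:ℝ), Real.Gamma b * (Real.exp (-w) * w ^ ((1 - b) - 1)) := by
        rw [hμ]
        refine setIntegral_congr_fun measurableSet_Ioi fun w hw => ?_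
        have hw0 : (0:ℝ) < w := hw
        have step1 : (∫ v, F v w ∂μ)
            = ∫ v in Ioi (0:ℝ), Real.exp (-w) * (v ^ (b - 1) * Real.exp (-(w * v))) := by
          rw [hμ]
          refine setIntegral_congr_fun measurableSet_Ioi fun v hv => ?_
          rw [hF]
          simp only
          rw [show -((1 + v) * w) = -w + -(w * v) by ring, Real.exp_add]
          ring
        rw [step1, MeasureTheory.integral_const_mul,
          show (fun v : ℝ => v ^ (b-1) * Real.exp (-(w * v))) = fun v : ℝ => v ^ (b-1) * Real.exp (-(w * v)) from rfl,
          Real.integral_rpow_mul_exp_neg_mul_Ioi hb0 hw0,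
          one_div, Real.inv_rpow hw0.le, ← Real.rpow_neg hw0.le,
          show (1 - b) - 1 = -b by ring]
        ring
    _ = Real.Gamma b * Real.Gamma (1 - b) := by
        rw [MeasureTheory.integral_const_mul, ← Real.Gamma_eq_integral (by linarith : (0:ℝ) < 1 - b)]

lemma myI {a : ℝ} (ha0 : 0 < a) (ha1 : a < 1) :
    ∫ t in Ioi (0:ℝ), t ^ a / (1 + t ^ 2)
      = Real.Gamma ((a + 1) / 2) * Real.Gamma (1 - (a + 1) / 2) / 2 := by
  have key := MeasureTheory.integral_comp_rpow_Ioi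
    (fun y : ℝ => y ^ ((a + 1) / 2 - 1) / (1 + y)) (p := 2) two_ne_zero
  have hbeta := myBeta (b := (a + 1) / 2) (by linarith) (by linarith)
  rw [hbeta] at key
  have hliv : ∀ x : ℝ, x ∈ Ioi (0:ℝ) →
      (|2| * x ^ ((2:ℝ) - 1)) • ((x ^ (2:ℝ)) ^ ((a + 1) / 2 - 1) / (1 + x ^ (2:ℝ)))
        = 2 * (x ^ a / (1 + x ^ 2)) := by
    intro x hx
    have hx0 : (0:ℝ) < x := hx
    have h1 : (x ^ (2:ℝ)) ^ ((a + 1) / 2 - 1) = x ^ (a - 1) := by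
      rw [← Real.rpow_mul hx0.le]
      congr 1
      ring
    have h2 : x ^ ((2:ℝ)) = x ^ (2:ℕ) := by
      rw [show (2:ℝ) = ((2:ℕ):ℝ) by norm_num, Real.rpow_natCast]
    have hxa : x * x ^ (a - 1) = x ^ a := by
      have h := Real.rpow_add hx0 1 (a - 1)
      rw [Real.rpow_one] at h
      rw [← h, show (1:ℝ) + (a - 1) = a by ring]
    rw [h1, h2, show |(2:ℝ)| = 2 by norm_num, show ((2:ℝ) - 1) = 1 by norm_num,
      Real.rpow_one, smul_eq_mul, ← hxa]
    ring
  have key2 : ∫ x in Ioi (0:ℝ), 2 * (x ^ a / (1 + x ^ 2))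
      = Real.Gamma ((a + 1) / 2) * Real.Gamma (1 - (a + 1) / 2) := by
    rw [← key]
    exact setIntegral_congr_fun measurableSet_Ioi (fun x hx => (hliv x hx).symm)
  rw [MeasureTheory.integral_const_mul] at key2
  rw [eq_div_iff (two_ne_zero)]
  linarith

lemma myIdent {a : ℝ} (ha0 : 0 < a) (ha1 : a < 1) :
    (Real.Gamma a)⁻¹ * (Real.Gamma ((a + 1) / 2) * Real.Gamma (1 - (a + 1) / 2) / 2)
      = Real.Gamma (1 - a) * Real.sin (a * Real.pi / 2) := by
  have hπ := Real.pi_pos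
  have h1 := Real.Gamma_mul_Gamma_one_sub ((a + 1) / 2)
  have h2 := Real.Gamma_mul_Gamma_one_sub a
  have hcos : Real.sin (Real.pi * ((a + 1) / 2)) = Real.cos (Real.pi * a / 2) := by
    rw [show Real.pi * ((a + 1) / 2) = Real.pi * a / 2 + Real.pi / 2 by ring,
      Real.sin_add_pi_div_two]
  have hsin2 : Real.sin (Real.pi * a)
      = 2 * Real.sin (Real.pi * a / 2) * Real.cos (Real.pi * a / 2) := by
    have h := Real.sin_two_mul (Real.pi * a / 2)
    rw [show 2 * (Real.pi * a / 2) = Real.pi * a by ring] at h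
    exact h
  have hsinpos : 0 < Real.sin (Real.pi * a / 2) := by
    apply Real.sin_pos_of_pos_of_lt_pi <;> nlinarith
  have hcospos : 0 < Real.cos (Real.pi * a / 2) := by
    refine Real.cos_pos_of_mem_Ioo ⟨by nlinarith, by nlinarith⟩
  have hsinapos : 0 < Real.sin (Real.pi * a) := by
    apply Real.sin_pos_of_pos_of_lt_pi <;> nlinarith
  have hΓ := Real.Gamma_pos_of_pos ha0
  have h2' : Real.Gamma a * Real.Gamma (1 - a) * Real.sin (Real.pi * a) = Real.pi := by
    rw [h2, div_mul_cancel₀ _ hsinapos.ne']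
  rw [h1, hcos]
  rw [show a * Real.pi / 2 = Real.pi * a / 2 by ring]
  rw [inv_mul_eq_div, div_eq_iff hΓ.ne', div_div, div_eq_iff (by positivity)]
  nlinarith [hsin2, h2']

lemma myKeyB {a : ℝ} (ha0 : 0 < a) (ha1 : a < 1) {R : ℝ} (hR : 0 < R) :
    Real.Gamma a * ∫ u in (0:ℝ)..R, u ^ (-a) * Real.cos u
      = ∫ t in Ioi (0:ℝ), t ^ (a - 1) *
          ((t + Real.exp (-(t * R)) * (Real.sin R - t * Real.cos R)) / (1 + t ^ 2)) := by
  set ν : Measure ℝ := volume.restrict (Ioc 0 R) with hν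
  set μ : Measure ℝ := volume.restrict (Ioi 0) with hμ
  set F : ℝ → ℝ → ℝ := fun t u => t ^ (a - 1) * Real.exp (-(t * u)) * Real.cos u with hF
  have hrinv : ∀ u : ℝ, 0 < u → (1 / u) ^ a = u ^ (-a) := by
    intro u hu
    rw [one_div, Real.inv_rpow hu.le, ← Real.rpow_neg hu.le]
  have hmeas : AEStronglyMeasurable (Function.uncurry F) (μ.prod ν) := by
    apply Measurable.aestronglyMeasurable
    exact ((myMeasRpow.comp measurable_fst).mul
        (Real.measurable_exp.comp (measurable_fst.mul measurable_snd).neg)).mul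
      (Real.measurable_cos.comp measurable_snd)
  have hinner : ∀ u : ℝ, 0 < u →
      (∫ t, F t u ∂μ) = Real.Gamma a * (u ^ (-a) * Real.cos u) := by
    intro u hu0
    have h1 : (∫ t, F t u ∂μ)
        = (∫ t in Ioi (0:ℝ), t ^ (a - 1) * Real.exp (-(u * t))) * Real.cos u := by
      rw [hμ, ← MeasureTheory.integral_mul_const]
      refine setIntegral_congr_fun measurableSet_Ioi fun t ht => ?_
      simp only [hF]
      rw [mul_comm t u]
    rw [h1, Real.integral_rpow_mul_exp_neg_mul_Ioi ha0 hu0, hrinv u hu0]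
    ring
  have hint : Integrable (Function.uncurry F) (μ.prod ν) := by
    rw [integrable_prod_iff' hmeas]
    constructor
    · filter_upwards [ae_restrict_mem measurableSet_Ioc] with u hu
      have hu0 : (0:ℝ) < u := hu.1
      have h1 : IntegrableOn (fun t : ℝ => t ^ (a - 1) * Real.exp (-(u * t))) (Ioi 0) :=
        myIntGamma ha0 hu0
      have h2 : IntegrableOn (fun t : ℝ => t ^ (a - 1) * Real.exp (-(u * t)) * Real.cos u)
          (Ioi 0) := h1.mul_const _
      refine IntegrableOn.congr_fun h2 (fun t ht => ?_) measurableSet_Ioi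
      simp only [hF, Function.uncurry]
      rw [mul_comm u t]
    · have hval : ∀ u : ℝ, 0 < u →
          (∫ t, ‖F t u‖ ∂μ) = Real.Gamma a * u ^ (-a) * |Real.cos u| := by
        intro u hu0
        have h1 : (∫ t, ‖F t u‖ ∂μ)
            = (∫ t in Ioi (0:ℝ), t ^ (a - 1) * Real.exp (-(u * t))) * |Real.cos u| := by
          rw [hμ, ← MeasureTheory.integral_mul_const]
          refine setIntegral_congr_fun measurableSet_Ioi fun t ht => ?_
          have ht0 : (0:ℝ) < t := ht
          simp only [hF, Real.norm_eq_abs, abs_mul]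
          rw [abs_of_nonneg (Real.rpow_nonneg ht0.le _), abs_of_nonneg (Real.exp_nonneg _),
            mul_comm t u]
        rw [h1, Real.integral_rpow_mul_exp_neg_mul_Ioi ha0 hu0, hrinv u hu0]
        ring
      have hg : IntegrableOn (fun u : ℝ => Real.Gamma a * u ^ (-a)) (Ioc 0 R) := by
        have h := intervalIntegrable_rpow' (a := 0) (b := R) (r := -a) (by linarith)
        rw [intervalIntegrable_iff_integrableOn_Ioc_of_le hR.le] at h
        exact h.const_mul _
      refine Integrable.mono' hg ?_ ?_
      · refine AEStronglyMeasurable.congr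
          (f := fun u : ℝ => Real.Gamma a * u ^ (-a) * |Real.cos u|) ?_ ?_
        · exact (((measurable_const.mul myMeasRpow).mul
            Real.measurable_cos.abs)).aestronglyMeasurable
        · filter_upwards [ae_restrict_mem measurableSet_Ioc] with u hu
          exact (hval u hu.1).symm
      · filter_upwards [ae_restrict_mem measurableSet_Ioc] with u hu
        have hu0 : (0:ℝ) < u := hu.1
        show |∫ t, ‖F t u‖ ∂μ| ≤ Real.Gamma a * u ^ (-a)
        rw [hval u hu0, abs_of_nonneg (by positivity)]
        have hc := abs_cos_le_one u
        have hprod : (0:ℝ) ≤ Real.Gamma a * u ^ (-a) :=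
          mul_nonneg (Real.Gamma_pos_of_pos ha0).le (Real.rpow_nonneg hu0.le _)
        nlinarith [abs_nonneg (Real.cos u)]
  calc Real.Gamma a * ∫ u in (0:ℝ)..R, u ^ (-a) * Real.cos u
      = ∫ u, (∫ t, F t u ∂μ) ∂ν := by
        rw [intervalIntegral.integral_of_le hR.le, hν, ← MeasureTheory.integral_const_mul]
        exact (setIntegral_congr_fun measurableSet_Ioc fun u hu => hinner u hu.1).symm
    _ = ∫ t, (∫ u, F t u ∂ν) ∂μ := (integral_integral_swap hint).symm
    _ = ∫ t in Ioi (0:ℝ), t ^ (a - 1) *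
          ((t + Real.exp (-(t * R)) * (Real.sin R - t * Real.cos R)) / (1 + t ^ 2)) := by
        rw [hμ]
        refine setIntegral_congr_fun measurableSet_Ioi fun t ht => ?_
        have h1 : (∫ u, F t u ∂ν)
            = t ^ (a - 1) * ∫ u in Ioc (0:ℝ) R, Real.exp (-(t * u)) * Real.cos u := by
          rw [hν, ← MeasureTheory.integral_const_mul]
          exact setIntegral_congr_fun measurableSet_Ioc fun u hu => by
            simp only [hF]; ring
        rw [h1, ← intervalIntegral.integral_of_le hR.le, myExpCos]

lemma myCore {a : ℝ} (ha0 : 0 < a) (ha1 : a < 1) :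
    Tendsto (fun R : ℝ => ∫ u in (0:ℝ)..R, u ^ (-a) * Real.cos u) atTop
      (𝓝 (Real.Gamma (1 - a) * Real.sin (a * Real.pi / 2))) := by
  have hΓ := Real.Gamma_pos_of_pos ha0
  set I : ℝ := ∫ t in Ioi (0:ℝ), t ^ a / (1 + t ^ 2) with hI
  have hEint : ∀ R : ℝ, 0 < R → IntegrableOn
      (fun t : ℝ => t ^ (a - 1) * (Real.exp (-(t * R)) * (Real.sin R - t * Real.cos R) / (1 + t ^ 2)))
      (Ioi 0) := by
    intro R hR
    have hg1 : IntegrableOn (fun t : ℝ => t ^ (a - 1) * Real.exp (-(R * t))) (Ioi 0) :=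
      myIntGamma ha0 hR
    have hg2 : IntegrableOn (fun t : ℝ => t ^ ((a + 1) - 1) * Real.exp (-(R * t))) (Ioi 0) :=
      myIntGamma (by linarith) hR
    have hg : IntegrableOn
        (fun t : ℝ => t ^ (a - 1) * Real.exp (-(R * t)) + t ^ ((a + 1) - 1) * Real.exp (-(R * t)))
        (Ioi 0) := hg1.add hg2
    refine Integrable.mono' hg ?_ ?_
    · apply Measurable.aestronglyMeasurable
      fun_prop
    · filter_upwards [ae_restrict_mem measurableSet_Ioi] with t ht
      have ht0 : (0:ℝ) < t := ht
      have hta : t ^ ((a + 1) - 1) = t ^ (a - 1) * t := by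
        rw [show (a + 1) - 1 = (a - 1) + 1 by ring, Real.rpow_add ht0, Real.rpow_one]
      have habs : |Real.sin R - t * Real.cos R| ≤ 1 + t := by
        calc |Real.sin R - t * Real.cos R| ≤ |Real.sin R| + |t * Real.cos R| := abs_sub _ _
          _ ≤ 1 + t := by
              have h1 := Real.abs_sin_le_one R
              have h2 : |t * Real.cos R| ≤ t := by
                rw [abs_mul, abs_of_nonneg ht0.le]
                nlinarith [Real.abs_cos_le_one R, ht0.le]
              linarith
      have hdenom : (1:ℝ) ≤ 1 + t ^ 2 := by nlinarith [sq_nonneg t]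
      rw [Real.norm_eq_abs, abs_mul, abs_of_nonneg (Real.rpow_nonneg ht0.le _), abs_div,
        abs_of_nonneg (by positivity : (0:ℝ) ≤ 1 + t ^ 2), abs_mul,
        abs_of_nonneg (Real.exp_nonneg _), hta, mul_comm t R]
      have hrp := Real.rpow_nonneg ht0.le (a - 1)
      have hex := Real.exp_nonneg (-(R * t))
      have hstep : Real.exp (-(R * t)) * |Real.sin R - t * Real.cos R| / (1 + t ^ 2)
          ≤ Real.exp (-(R * t)) * (1 + t) := by
        rw [div_le_iff₀ (by positivity)]
        have h3 : Real.exp (-(R * t)) * |Real.sin R - t * Real.cos R|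
            ≤ Real.exp (-(R * t)) * (1 + t) := by
          apply mul_le_mul_of_nonneg_left habs hex
        nlinarith [mul_nonneg hex (by linarith : (0:ℝ) ≤ 1 + t), sq_nonneg t]
      calc t ^ (a - 1) * (Real.exp (-(R * t)) * |Real.sin R - t * Real.cos R| / (1 + t ^ 2))
          ≤ t ^ (a - 1) * (Real.exp (-(R * t)) * (1 + t)) := by
            apply mul_le_mul_of_nonneg_left hstep hrp
        _ = t ^ (a - 1) * Real.exp (-(R * t)) + t ^ (a - 1) * t * Real.exp (-(R * t)) := by ring
  have hsplit : ∀ R : ℝ, 0 < R →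
      Real.Gamma a * (∫ u in (0:ℝ)..R, u ^ (-a) * Real.cos u) - I
        = ∫ t in Ioi (0:ℝ),
            t ^ (a - 1) * (Real.exp (-(t * R)) * (Real.sin R - t * Real.cos R) / (1 + t ^ 2)) := by
    intro R hR
    rw [myKeyB ha0 ha1 hR, hI, sub_eq_iff_eq_add]
    rw [← MeasureTheory.integral_add (hEint R hR) (myIntC ha0 ha1)]
    refine setIntegral_congr_fun measurableSet_Ioi fun t ht => ?_
    have ht0 : (0:ℝ) < t := ht
    have hta : t ^ (a - 1) * t = t ^ a := by
      have h := Real.rpow_add ht0 (a - 1) 1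
      rw [Real.rpow_one] at h
      rw [← h, show a - 1 + 1 = a by ring]
    have h12 : (1:ℝ) + t ^ 2 ≠ 0 := by positivity
    field_simp
    nlinarith [hta]
  have hptwise : ∀ R : ℝ, 0 < R → ∀ᵐ t ∂(volume.restrict (Ioi (0:ℝ))),
      ‖t ^ (a - 1) * (Real.exp (-(t * R)) * (Real.sin R - t * Real.cos R) / (1 + t ^ 2))‖
        ≤ t ^ (a - 1) * Real.exp (-(R * t)) + t ^ ((a + 1) - 1) * Real.exp (-(R * t)) := by
    intro R hR
    filter_upwards [ae_restrict_mem measurableSet_Ioi] with t ht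
    have ht0 : (0:ℝ) < t := ht
    have hta : t ^ ((a + 1) - 1) = t ^ (a - 1) * t := by
      rw [show (a + 1) - 1 = (a - 1) + 1 by ring, Real.rpow_add ht0, Real.rpow_one]
    have habs : |Real.sin R - t * Real.cos R| ≤ 1 + t := by
      calc |Real.sin R - t * Real.cos R| ≤ |Real.sin R| + |t * Real.cos R| := abs_sub _ _
        _ ≤ 1 + t := by
            have h1 := Real.abs_sin_le_one R
            have h2 : |t * Real.cos R| ≤ t := by
              rw [abs_mul, abs_of_nonneg ht0.le]
              nlinarith [Real.abs_cos_le_one R, ht0.le]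
            linarith
    rw [Real.norm_eq_abs, abs_mul, abs_of_nonneg (Real.rpow_nonneg ht0.le _), abs_div,
      abs_of_nonneg (by positivity : (0:ℝ) ≤ 1 + t ^ 2), abs_mul,
      abs_of_nonneg (Real.exp_nonneg _), hta, mul_comm t R]
    have hrp := Real.rpow_nonneg ht0.le (a - 1)
    have hex := Real.exp_nonneg (-(R * t))
    have hstep : Real.exp (-(R * t)) * |Real.sin R - t * Real.cos R| / (1 + t ^ 2)
        ≤ Real.exp (-(R * t)) * (1 + t) := by
      rw [div_le_iff₀ (by positivity)]
      have h3 : Real.exp (-(R * t)) * |Real.sin R - t * Real.cos R|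
          ≤ Real.exp (-(R * t)) * (1 + t) :=
        mul_le_mul_of_nonneg_left habs hex
      nlinarith [mul_nonneg hex (by linarith : (0:ℝ) ≤ 1 + t), sq_nonneg t]
    calc t ^ (a - 1) * (Real.exp (-(R * t)) * |Real.sin R - t * Real.cos R| / (1 + t ^ 2))
        ≤ t ^ (a - 1) * (Real.exp (-(R * t)) * (1 + t)) :=
          mul_le_mul_of_nonneg_left hstep hrp
      _ = t ^ (a - 1) * Real.exp (-(R * t)) + t ^ (a - 1) * t * Real.exp (-(R * t)) := by ring
  have hbound : ∀ R : ℝ, 0 < R →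
      |Real.Gamma a * (∫ u in (0:ℝ)..R, u ^ (-a) * Real.cos u) - I|
        ≤ (1 / R) ^ a * Real.Gamma a + (1 / R) ^ (a + 1) * Real.Gamma (a + 1) := by
    intro R hR
    rw [hsplit R hR]
    have hg1 : IntegrableOn (fun t : ℝ => t ^ (a - 1) * Real.exp (-(R * t))) (Ioi 0) :=
      myIntGamma ha0 hR
    have hg2 : IntegrableOn (fun t : ℝ => t ^ ((a + 1) - 1) * Real.exp (-(R * t))) (Ioi 0) :=
      myIntGamma (by linarith) hR
    have h := norm_integral_le_of_norm_le (hg1.add hg2) (hptwise R hR)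
    rw [Real.norm_eq_abs] at h
    calc |∫ t in Ioi (0:ℝ),
          t ^ (a - 1) * (Real.exp (-(t * R)) * (Real.sin R - t * Real.cos R) / (1 + t ^ 2))|
        ≤ ∫ t in Ioi (0:ℝ),
            (t ^ (a - 1) * Real.exp (-(R * t)) + t ^ ((a + 1) - 1) * Real.exp (-(R * t))) := h
      _ = (1 / R) ^ a * Real.Gamma a + (1 / R) ^ (a + 1) * Real.Gamma (a + 1) := by
          rw [MeasureTheory.integral_add hg1 hg2,
            Real.integral_rpow_mul_exp_neg_mul_Ioi ha0 hR,
            Real.integral_rpow_mul_exp_neg_mul_Ioi (show (0:ℝ) < a + 1 by linarith) hR]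
  have hb0 : Tendsto (fun R : ℝ => (1 / R) ^ a * Real.Gamma a
      + (1 / R) ^ (a + 1) * Real.Gamma (a + 1)) atTop (𝓝 0) := by
    have t1 : Tendsto (fun R : ℝ => (1 / R) ^ a) atTop (𝓝 0) := by
      refine (tendsto_rpow_neg_atTop ha0).congr' ?_
      filter_upwards [eventually_gt_atTop (0:ℝ)] with R hR
      rw [one_div, Real.inv_rpow hR.le, ← Real.rpow_neg hR.le]
    have t2 : Tendsto (fun R : ℝ => (1 / R) ^ (a + 1)) atTop (𝓝 0) := by
      refine (tendsto_rpow_neg_atTop (by linarith : (0:ℝ) < a + 1)).congr' ?_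
      filter_upwards [eventually_gt_atTop (0:ℝ)] with R hR
      rw [one_div, Real.inv_rpow hR.le, ← Real.rpow_neg hR.le]
    simpa using (t1.mul_const _).add (t2.mul_const _)
  have hsq : Tendsto (fun R : ℝ =>
      Real.Gamma a * (∫ u in (0:ℝ)..R, u ^ (-a) * Real.cos u) - I) atTop (𝓝 0) := by
    apply squeeze_zero_norm' ?_ hb0
    filter_upwards [eventually_gt_atTop (0:ℝ)] with R hR
    rw [Real.norm_eq_abs]
    exact hbound R hR
  have hT : Tendsto (fun R : ℝ =>
      Real.Gamma a * ∫ u in (0:ℝ)..R, u ^ (-a) * Real.cos u) atTop (𝓝 I) := by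
    have h := hsq.add_const I
    simpa using h
  have hT2 := hT.const_mul (Real.Gamma a)⁻¹
  have heq : ∀ R : ℝ, (Real.Gamma a)⁻¹ * (Real.Gamma a * ∫ u in (0:ℝ)..R, u ^ (-a) * Real.cos u)
      = ∫ u in (0:ℝ)..R, u ^ (-a) * Real.cos u := fun R => inv_mul_cancel_left₀ hΓ.ne' _
  have hval : (Real.Gamma a)⁻¹ * I = Real.Gamma (1 - a) * Real.sin (a * Real.pi / 2) := by
    rw [hI, myI ha0 ha1, myIdent ha0 ha1]
  rw [← hval]
  exact Tendsto.congr heq hT2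

lemma myII {γ : ℝ} (hγ : -1 < γ) (c : ℝ) {R : ℝ} (hR : 0 ≤ R) :
    IntervalIntegrable (fun ξ : ℝ => Complex.exp ((c : ℂ) * Complex.I * ξ) * ((|ξ| ^ γ : ℝ) : ℂ))
      volume 0 R := by
  rw [intervalIntegrable_iff_integrableOn_Ioc_of_le hR]
  have hg : IntegrableOn (fun ξ : ℝ => ξ ^ γ) (Ioc 0 R) := by
    have h := intervalIntegrable_rpow' (a := 0) (b := R) (r := γ) hγ
    rwa [intervalIntegrable_iff_integrableOn_Ioc_of_le hR] at h
  have hg' : IntegrableOn (fun ξ : ℝ => |ξ| ^ γ) (Ioc 0 R) := by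
    refine IntegrableOn.congr_fun hg (fun ξ hξ => ?_) measurableSet_Ioc
    rw [abs_of_pos hξ.1]
  refine Integrable.mono' hg' ?_ ?_
  · apply Measurable.aestronglyMeasurable
    apply Measurable.mul
    · exact Complex.measurable_exp.comp (by fun_prop)
    · exact Complex.measurable_ofReal.comp (myMeasRpow.comp measurable_abs)
  · filter_upwards with ξ
    rw [norm_mul]
    have h1 : ‖Complex.exp ((c : ℂ) * Complex.I * ξ)‖ = 1 := by
      rw [show (c : ℂ) * Complex.I * ξ = ((c * ξ : ℝ) : ℂ) * Complex.I by push_cast; ring,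
        Complex.norm_exp_ofReal_mul_I]
    rw [h1, one_mul, Complex.norm_real, Real.norm_eq_abs,
      abs_of_nonneg (Real.rpow_nonneg (abs_nonneg ξ) γ)]

/-- The Fourier transform of `ξ ↦ |ξ|^α` for `α ∈ (−1,0)`: for `x ≠ 0` the improper
integral `lim_{R→∞} ∫_{−R}^{R} e^{−2πixξ} |ξ|^α dξ` exists and equals
`2 sin(−απ/2) Γ(α+1) / |2πx|^{α+1}`. -/
theorem stmt_14 (α : ℝ) (hα₁ : -1 < α) (hα₂ : α < 0) (x : ℝ) (hx : x ≠ 0) :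
    Tendsto (fun R : ℝ =>
        ∫ ξ in (-R)..R,
          Complex.exp (-2 * Real.pi * Complex.I * x * ξ) * ((|ξ| ^ α : ℝ) : ℂ)) atTop
      (𝓝 (((2 * Real.sin (-α * Real.pi / 2) * Real.Gamma (α + 1) /
          |2 * Real.pi * x| ^ (α + 1) : ℝ) : ℂ))) := by
  have hπ := Real.pi_pos
  set b : ℝ := |2 * Real.pi * x| with hb_def
  have hb : 0 < b := by
    rw [hb_def]
    positivity
  set F : ℝ → ℂ := fun ξ => Complex.exp (-2 * Real.pi * Complex.I * x * ξ) * ((|ξ| ^ α : ℝ) : ℂ)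
    with hF
  set g : ℝ → ℝ := fun u => |u| ^ α * Real.cos u with hg
  set ψ : ℝ → ℝ := fun S => ∫ u in (0:ℝ)..S, g u with hψ
  set L : ℝ := Real.Gamma (1 - -α) * Real.sin (-α * Real.pi / 2) with hL
  -- the core limit
  have hψT : Tendsto ψ atTop (𝓝 L) := by
    refine (myCore (a := -α) (by linarith) (by linarith)).congr' ?_
    filter_upwards [eventually_ge_atTop (0:ℝ)] with S hS
    simp only [hψ, hg]
    refine intervalIntegral.integral_congr fun v hv => ?_
    rw [uIcc_of_le hS] at hv
    rw [neg_neg, abs_of_nonneg hv.1]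
  -- interval integrability of F on 0..R
  have hF1 : ∀ R : ℝ, 0 ≤ R → IntervalIntegrable F volume 0 R := by
    intro R hR
    have h := myII hα₁ (-(2 * Real.pi * x)) hR
    have hfe : (fun ξ : ℝ => Complex.exp ((((-(2 * Real.pi * x)) : ℝ) : ℂ) * Complex.I * ξ)
        * ((|ξ| ^ α : ℝ) : ℂ)) = F := by
      funext ξ
      rw [hF]
      simp only
      congr 2
      push_cast
      ring
    exact hfe ▸ h
  have hFneg : ∀ R : ℝ, 0 ≤ R → IntervalIntegrable (fun ξ => F (-ξ)) volume 0 R := by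
    intro R hR
    have h := myII hα₁ (2 * Real.pi * x) hR
    have hfe : (fun ξ : ℝ => Complex.exp ((((2 * Real.pi * x) : ℝ) : ℂ) * Complex.I * ξ)
        * ((|ξ| ^ α : ℝ) : ℂ)) = fun ξ => F (-ξ) := by
      funext ξ
      rw [hF]
      simp only
      rw [abs_neg]
      congr 2
      push_cast
      ring
    exact hfe ▸ h
  have hF2 : ∀ R : ℝ, 0 ≤ R → IntervalIntegrable F volume (-R) 0 := by
    intro R hR
    refine (IntervalIntegrable.iff_comp_neg (f := F) (a := -R) (b := 0)).mpr ?_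
    rw [neg_neg, neg_zero]
    exact (hFneg R hR).symm
  have hpt : ∀ ξ : ℝ, F (-ξ) + F ξ
      = ((2 * Real.cos (2 * Real.pi * x * ξ) * |ξ| ^ α : ℝ) : ℂ) := by
    intro ξ
    rw [hF]
    simp only
    rw [abs_neg]
    have e1 : (-2 : ℂ) * (Real.pi : ℂ) * Complex.I * (x : ℂ) * ((-ξ : ℝ) : ℂ)
        = ((2 * Real.pi * x * ξ : ℝ) : ℂ) * Complex.I := by push_cast; ring
    have e2 : (-2 : ℂ) * (Real.pi : ℂ) * Complex.I * (x : ℂ) * ((ξ : ℝ) : ℂ)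
        = (-((2 * Real.pi * x * ξ : ℝ) : ℂ)) * Complex.I := by push_cast; ring
    rw [e1, e2, Complex.exp_mul_I, Complex.exp_mul_I, Complex.cos_neg, Complex.sin_neg]
    push_cast [Complex.ofReal_cos]
    ring
  have hmain : ∀ R : ℝ, 0 ≤ R →
      (∫ ξ in (-R)..R, F ξ) = ((2 * b ^ (-(α + 1)) * ψ (b * R) : ℝ) : ℂ) := by
    intro R hR
    have h1 : (∫ ξ in (-R)..(0:ℝ), F ξ) = ∫ ξ in (0:ℝ)..R, F (-ξ) := by
      have h := intervalIntegral.integral_comp_neg (a := (0:ℝ)) (b := R) (f := F)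
      rw [neg_zero] at h
      exact h.symm
    have h2 : (∫ ξ in (-R)..R, F ξ) = (∫ ξ in (-R)..(0:ℝ), F ξ) + ∫ ξ in (0:ℝ)..R, F ξ :=
      (intervalIntegral.integral_add_adjacent_intervals (hF2 R hR) (hF1 R hR)).symm
    rw [h2, h1, ← intervalIntegral.integral_add (hFneg R hR) (hF1 R hR)]
    have h3 : (∫ ξ in (0:ℝ)..R, (F (-ξ) + F ξ))
        = ∫ ξ in (0:ℝ)..R, ((2 * Real.cos (2 * Real.pi * x * ξ) * |ξ| ^ α : ℝ) : ℂ) :=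
      intervalIntegral.integral_congr fun ξ _ => hpt ξ
    rw [h3, intervalIntegral.integral_ofReal]
    congr 1
    have h5 : ∫ ξ in (0:ℝ)..R, g (b * ξ) = b⁻¹ * ψ (b * R) := by
      have h := intervalIntegral.smul_integral_comp_mul_left (f := g) (a := 0) (b := R) b
      rw [mul_zero] at h
      rw [hψ]
      simp only
      rw [← h, smul_eq_mul, inv_mul_cancel_left₀ hb.ne']
    have h6 : ∀ ξ : ℝ, 2 * Real.cos (2 * Real.pi * x * ξ) * |ξ| ^ α
        = 2 * b ^ (-α) * g (b * ξ) := by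
      intro ξ
      simp only [hg]
      have hcos : Real.cos (b * ξ) = Real.cos (2 * Real.pi * x * ξ) := by
        rcases abs_cases (2 * Real.pi * x) with h | h
        · rw [hb_def, h.1]
        · rw [hb_def, h.1, show -(2 * Real.pi * x) * ξ = -(2 * Real.pi * x * ξ) by ring,
            Real.cos_neg]
      have habs : |b * ξ| ^ α = b ^ α * |ξ| ^ α := by
        rw [abs_mul, abs_of_pos hb, Real.mul_rpow hb.le (abs_nonneg ξ)]
      rw [hcos, habs]
      have hbb : b ^ (-α) * b ^ α = 1 := by
        rw [← Real.rpow_add hb]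
        norm_num
      have harr : 2 * b ^ (-α) * (b ^ α * |ξ| ^ α * Real.cos (2 * Real.pi * x * ξ))
          = (b ^ (-α) * b ^ α) * (2 * |ξ| ^ α * Real.cos (2 * Real.pi * x * ξ)) := by ring
      rw [harr, hbb, one_mul]
      ring
    calc (∫ ξ in (0:ℝ)..R, 2 * Real.cos (2 * Real.pi * x * ξ) * |ξ| ^ α)
        = ∫ ξ in (0:ℝ)..R, 2 * b ^ (-α) * g (b * ξ) :=
          intervalIntegral.integral_congr fun ξ _ => h6 ξ
      _ = 2 * b ^ (-α) * ∫ ξ in (0:ℝ)..R, g (b * ξ) := intervalIntegral.integral_const_mul _ _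
      _ = 2 * b ^ (-α) * (b⁻¹ * ψ (b * R)) := by rw [h5]
      _ = 2 * b ^ (-(α + 1)) * ψ (b * R) := by
          rw [show b ^ (-(α + 1)) = b ^ (-α) * b⁻¹ by
            rw [← Real.rpow_neg_one b, ← Real.rpow_add hb]; congr 1; ring]
          ring
  have hcomp : Tendsto (fun R : ℝ => b * R) atTop atTop :=
    Tendsto.const_mul_atTop hb tendsto_id
  have hrT : Tendsto (fun R : ℝ => 2 * b ^ (-(α + 1)) * ψ (b * R)) atTop
      (𝓝 (2 * b ^ (-(α + 1)) * L)) := (hψT.comp hcomp).const_mul _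
  have hcT : Tendsto (fun R : ℝ => ((2 * b ^ (-(α + 1)) * ψ (b * R) : ℝ) : ℂ)) atTop
      (𝓝 ((2 * b ^ (-(α + 1)) * L : ℝ) : ℂ)) :=
    (Complex.continuous_ofReal.tendsto _).comp hrT
  have hconst : ((2 * b ^ (-(α + 1)) * L : ℝ) : ℂ)
      = ((2 * Real.sin (-α * Real.pi / 2) * Real.Gamma (α + 1) / b ^ (α + 1) : ℝ) : ℂ) := by
    congr 1
    rw [hL, show (1 : ℝ) - -α = α + 1 by ring, Real.rpow_neg hb.le]
    ring
  refine Tendsto.congr' ?_ (hconst ▸ hcT)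
  filter_upwards [eventually_ge_atTop (0:ℝ)] with R hR
  exact (hmain R hR).symm
end
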